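/- arXiv:1707.09962 — 8 statements merged into one kernel-verified Lean document; each statement's English description precedes it below -/
import Mathlib

section
/- Let α, β > 0 and G ∈ ℝ with 2αβ < G < α² + αβ. Then v* := (α+β)/2 − √( ((α+β)/2)² + G − αβ ) satisfies −α < v* < 0, and for any v ∈ (−α, 0] the equation −v = ( G/(α−v) − β )₊ holds if and only if v = v*. Here (y)₊ denotes the positive part max(y,0). -/
/-!
STATEMENT 3: For `α, β > 0` and `2αβ < G < α² + αβ`, the value
`v* = (α+β)/2 − √(((α+β)/2)² + G − αβ)` satisfies `−α < v* < 0`, and for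
`v ∈ (−α, 0]` one has `−v = (G/(α−v) − β)₊` iff `v = v*`, where `(y)₊ = max y 0`.
-/

theorem free_boundary_velocity_characterization (α β G : ℝ)
    (hα : 0 < α) (hβ : 0 < β) (h1 : 2 * α * β < G) (h2 : G < α ^ 2 + α * β) :
    (-α < (α + β) / 2 - Real.sqrt (((α + β) / 2) ^ 2 + G - α * β) ∧
      (α + β) / 2 - Real.sqrt (((α + β) / 2) ^ 2 + G - α * β) < 0) ∧
    ∀ v ∈ Set.Ioc (-α) (0 : ℝ),
      (-v = max (G / (α - v) - β) 0 ↔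
        v = (α + β) / 2 - Real.sqrt (((α + β) / 2) ^ 2 + G - α * β)) := by
  set m : ℝ := (α + β) / 2 with hm
  set D : ℝ := m ^ 2 + G - α * β with hDdef
  have hm0 : 0 < m := by positivity
  have hD0 : 0 < D := by nlinarith
  set s : ℝ := Real.sqrt D with hs
  have hs0 : 0 ≤ s := Real.sqrt_nonneg _
  have hs2 : s ^ 2 = D := Real.sq_sqrt hD0.le
  have hsm : m < s := by nlinarith
  have hsma : s < m + α := by nlinarith
  have hv1 : -α < m - s := by linarith
  have hv2 : m - s < 0 := by linarith
  refine ⟨⟨hv1, hv2⟩, ?_⟩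
  rintro v ⟨hvα, hv0⟩
  have hav : 0 < α - v := by linarith
  constructor
  · intro h
    rcases eq_or_lt_of_le hv0 with h0 | h0
    · exfalso
      rw [h0] at h
      have hle : G / (α - 0) - β ≤ 0 := by
        have := le_max_left (G / (α - 0) - β) 0
        rw [← h] at this; linarith
      have hGα : G / α ≤ β := by simpa using hle
      have hGle : G ≤ α * β := by
        rw [div_le_iff₀ hα] at hGα; linarith
      nlinarith
    · -- v < 0, so -v > 0, max equals the left argument
      have hnv : 0 < -v := by linarith
      have heq : G / (α - v) - β = -v := by
        rcases max_cases (G / (α - v) - β) 0 with ⟨he, _⟩ | ⟨he, _⟩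
        · rw [he] at h; linarith [h.symm ▸ le_refl (-v)]
        · exfalso; rw [he] at h; linarith
      have hG : G = (β - v) * (α - v) := by
        field_simp at heq
        nlinarith [heq]
      -- (v - m)^2 = s^2, v - m < 0 ≤ s
      have hq : (v - m) ^ 2 = s ^ 2 := by rw [hs2]; nlinarith
      have hfac : (v - m + s) * (v - m - s) = 0 := by linear_combination hq
      rcases mul_eq_zero.mp hfac with h' | h'
      · linarith
      · exfalso; linarith
  · intro h
    rw [h]
    have hm' : 2 * m = α + β := by rw [hm]; ring
    have hG : G = (β - (m - s)) * (α - (m - s)) := by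
      linear_combination -hs2 + (s - m) * hm'
    have hx : (0:ℝ) < α - (m - s) := by linarith
    have hquot : G / (α - (m - s)) = β - (m - s) := by
      rw [hG, mul_div_cancel_right₀ _ hx.ne']
    rw [hquot]
    rw [max_eq_left (by linarith)]
    ring
end

section
/- Let α, β > 0, s₀ ∈ (0, 1/2], T = (1−s₀)/α, and let g : ℝ → ℝ be continuously differentiable and satisfy 2αβ < g(x) < α² + αβ for all x ∈ ℝ. Then the Cauchy problem ṡ(t) = (α+β)/2 − √( ((α+β)/2)² + g(s(t)+αt) − αβ ), s(0) = s₀, has a unique continuously differentiable solution s on [0,T]; moreover this solution satisfies −α < ṡ(t) < 0 for all t ∈ [0,T] (so s is strictly decreasing), and s₀ ≤ s(t) + αt ≤ 1 for all t ∈ [0,T]. -/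
/-!
STATEMENT 4: Under hypothesis (H3) (`2αβ < g < α² + αβ`, with `g` of class `C¹`),
the Cauchy problem `ṡ = (α+β)/2 − √(((α+β)/2)² + g(s+αt) − αβ)`, `s(0) = s₀`,
has a unique `C¹` solution on `[0, T]` with `T = (1−s₀)/α`; moreover
`−α < ṡ < 0` (so `s` is strictly decreasing) and `s₀ ≤ s(t)+αt ≤ 1` on `[0,T]`.
-/

theorem free_boundary_ode_global_wellposed (α β s₀ T : ℝ) (g : ℝ → ℝ)
    (hα : 0 < α) (hβ : 0 < β) (hs₀ : s₀ ∈ Set.Ioc 0 (1 / 2 : ℝ))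
    (hT : T = (1 - s₀) / α) (hg : ContDiff ℝ 1 g)
    (hgl : ∀ x : ℝ, 2 * α * β < g x) (hgu : ∀ x : ℝ, g x < α ^ 2 + α * β) :
    ∃ s : ℝ → ℝ,
      (ContDiffOn ℝ 1 s (Set.Icc 0 T) ∧ s 0 = s₀ ∧
        ∀ t ∈ Set.Icc 0 T, HasDerivWithinAt s
          ((α + β) / 2 - Real.sqrt (((α + β) / 2) ^ 2 + g (s t + α * t) - α * β))
          (Set.Icc 0 T) t) ∧
      (∀ s' : ℝ → ℝ,
        (ContDiffOn ℝ 1 s' (Set.Icc 0 T) ∧ s' 0 = s₀ ∧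
          ∀ t ∈ Set.Icc 0 T, HasDerivWithinAt s'
            ((α + β) / 2 - Real.sqrt (((α + β) / 2) ^ 2 + g (s' t + α * t) - α * β))
            (Set.Icc 0 T) t) →
        Set.EqOn s' s (Set.Icc 0 T)) ∧
      (∀ t ∈ Set.Icc 0 T,
        -α < (α + β) / 2 - Real.sqrt (((α + β) / 2) ^ 2 + g (s t + α * t) - α * β) ∧
        (α + β) / 2 - Real.sqrt (((α + β) / 2) ^ 2 + g (s t + α * t) - α * β) < 0) ∧
      StrictAntiOn s (Set.Icc 0 T) ∧
      (∀ t ∈ Set.Icc 0 T, s₀ ≤ s t + α * t ∧ s t + α * t ≤ 1) := by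
  classical
  -- The right-hand side as a function of the spatial variable `y = x + α t`.
  set F : ℝ → ℝ := fun y => (α + β) / 2 - Real.sqrt (((α + β) / 2) ^ 2 + g y - α * β)
    with hF
  have hTpos : 0 < T := by
    rw [hT]; exact div_pos (by linarith [hs₀.2]) hα
  have hαT : α * T = 1 - s₀ := by
    rw [hT]; field_simp
  -- positivity of the radicand
  have hA : ∀ y : ℝ, (0 : ℝ) < ((α + β) / 2) ^ 2 + g y - α * β := by
    intro y
    nlinarith [hgl y, sq_nonneg ((α + β) / 2), mul_pos hα hβ]
  -- the velocity is negative
  have hFneg : ∀ y : ℝ, F y < 0 := by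
    intro y
    have h1 := Real.sq_sqrt (hA y).le
    have h2 := Real.sqrt_nonneg (((α + β) / 2) ^ 2 + g y - α * β)
    simp only [hF]
    nlinarith [hgl y, mul_pos hα hβ, sq_nonneg (Real.sqrt (((α + β) / 2) ^ 2 + g y - α * β) - (α + β) / 2)]
  -- the velocity is greater than -α
  have hFgt : ∀ y : ℝ, -α < F y := by
    intro y
    have h1 := Real.sq_sqrt (hA y).le
    have h2 := Real.sqrt_nonneg (((α + β) / 2) ^ 2 + g y - α * β)
    simp only [hF]
    nlinarith [hgu y, mul_pos hα hβ, sq_nonneg (Real.sqrt (((α + β) / 2) ^ 2 + g y - α * β) - (α + β) / 2 - α)]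
  have hFnorm : ∀ y : ℝ, ‖F y‖ ≤ α := by
    intro y
    rw [Real.norm_eq_abs, abs_le]
    exact ⟨(hFgt y).le, (hFneg y).le.trans hα.le⟩
  -- F is C¹
  have hFC1 : ContDiff ℝ 1 F := by
    apply contDiff_const.sub
    exact ((contDiff_const.add hg).sub contDiff_const).sqrt fun y => (hA y).ne'
  -- the time-dependent vector field
  set v : ℝ → ℝ → ℝ := fun t x => F (x + α * t) with hv
  set R : ℝ := α * T with hRdef
  have hRpos : 0 < R := mul_pos hα hTpos
  set J : Set ℝ := Set.Icc (s₀ - R) (s₀ + 2 * R) with hJ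
  -- Lipschitz constant of F on J
  obtain ⟨L, hL⟩ : ∃ L : NNReal, LipschitzOnWith L F J := by
    obtain ⟨M, hM⟩ := (isCompact_Icc : IsCompact J).exists_bound_of_continuousOn
      ((hFC1.continuous_deriv le_rfl).continuousOn)
    refine ⟨⟨max M 0, le_max_right _ _⟩, ?_⟩
    apply (convex_Icc _ _).lipschitzOnWith_of_nnnorm_hasDerivWithin_le
      (f' := deriv F)
      (fun x hx => ((hFC1.differentiable one_ne_zero).differentiableAt.hasDerivAt).hasDerivWithinAt)
    intro x hx
    apply NNReal.coe_le_coe.mp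
    simp only [coe_nnnorm, Real.norm_eq_abs, NNReal.coe_mk]
    exact (Real.norm_eq_abs _ ▸ hM x hx).trans (le_max_left _ _)
  -- Lipschitz property of v t on translated sets
  have hlip : ∀ t : ℝ, LipschitzOnWith L (v t) {x | x + α * t ∈ J} := by
    intro t
    intro x hx y hy
    have := hL hx hy
    simpa [hv, edist_dist, Real.dist_eq] using this
  -- Picard–Lindelöf data
  have hball : ∀ t ∈ Set.Icc (0 : ℝ) T, Metric.closedBall s₀ R ⊆ {x | x + α * t ∈ J} := by
    intro t ht x hx
    rw [Metric.mem_closedBall, Real.dist_eq, abs_le] at hx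
    have h1 : 0 ≤ α * t := mul_nonneg hα.le ht.1
    have h2 : α * t ≤ R := by
      rw [hRdef]; exact mul_le_mul_of_nonneg_left ht.2 hα.le
    exact ⟨by linarith, by linarith⟩
  have hPL : IsPicardLindelof v (tmin := 0) (tmax := T) ⟨0, Set.left_mem_Icc.2 hTpos.le⟩ s₀
      ⟨R, hRpos.le⟩ 0 ⟨α, hα.le⟩ L := by
    refine ⟨?_, ?_, ?_, ?_⟩
    · intro t ht
      exact (hlip t).mono (hball t ht)
    · intro x _
      apply Continuous.continuousOn
      exact hFC1.continuous.comp (continuous_const.add (continuous_const.mul continuous_id))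
    · intro t _ x _
      exact hFnorm _
    · have : max (T - 0) (0 - 0) = T := by
        rw [sub_zero, sub_zero]; exact max_eq_left hTpos.le
      simp only [NNReal.coe_mk, NNReal.coe_zero, tsub_zero, sub_zero, this, le_refl]
      exact le_of_eq (by rw [max_eq_left hTpos.le]; rfl)
  obtain ⟨s, hs0, hsd⟩ := hPL.exists_eq_forall_mem_Icc_hasDerivWithinAt₀
  have hs0 : s 0 = s₀ := hs0
  -- a priori bound for any solution
  have apriori : ∀ f : ℝ → ℝ, f 0 = s₀ →
      (∀ t ∈ Set.Icc 0 T, HasDerivWithinAt f (F (f t + α * t)) (Set.Icc 0 T) t) →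
      ∀ t ∈ Set.Icc 0 T, |f t - s₀| ≤ α * t := by
    intro f hf0 hfd t ht
    have := Convex.norm_image_sub_le_of_norm_hasDerivWithin_le
      (f' := fun u => F (f u + α * u)) hfd
      (fun x _ => hFnorm _) (convex_Icc 0 T) (Set.left_mem_Icc.2 hTpos.le) ht
    rw [hf0] at this
    simpa [Real.norm_eq_abs, abs_of_nonneg ht.1] using this
  have hmem : ∀ f : ℝ → ℝ, f 0 = s₀ →
      (∀ t ∈ Set.Icc 0 T, HasDerivWithinAt f (F (f t + α * t)) (Set.Icc 0 T) t) →
      ∀ t ∈ Set.Icc 0 T, f t + α * t ∈ J := by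
    intro f hf0 hfd t ht
    have h := apriori f hf0 hfd t ht
    rw [abs_le] at h
    have h1 : 0 ≤ α * t := mul_nonneg hα.le ht.1
    have h2 : α * t ≤ R := by
      rw [hRdef]; exact mul_le_mul_of_nonneg_left ht.2 hα.le
    exact ⟨by linarith, by linarith⟩
  -- derivative data for s in the convenient form
  have hsd' : ∀ t ∈ Set.Icc (0:ℝ) T, HasDerivWithinAt s (F (s t + α * t)) (Set.Icc 0 T) t :=
    fun t ht => hsd t ht
  have hscont : ContinuousOn s (Set.Icc 0 T) :=
    fun t ht => (hsd' t ht).continuousWithinAt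
  have hUD : UniqueDiffOn ℝ (Set.Icc (0:ℝ) T) := uniqueDiffOn_Icc hTpos
  -- C¹ regularity of any solution
  have creg : ∀ f : ℝ → ℝ,
      (∀ t ∈ Set.Icc 0 T, HasDerivWithinAt f (F (f t + α * t)) (Set.Icc 0 T) t) →
      ContDiffOn ℝ 1 f (Set.Icc 0 T) := by
    intro f hfd
    have hfc : ContinuousOn f (Set.Icc 0 T) := fun t ht => (hfd t ht).continuousWithinAt
    rw [show (1 : WithTop ℕ∞) = 0 + 1 from rfl, contDiffOn_succ_iff_derivWithin hUD]
    refine ⟨fun t ht => ((hfd t ht).differentiableWithinAt), ?_, ?_⟩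
    · intro h; exact absurd h (by simp)
    · rw [contDiffOn_zero]
      apply ContinuousOn.congr
        (f := fun t => F (f t + α * t))
        (hFC1.continuous.comp_continuousOn (hfc.add (continuous_const.mul continuous_id).continuousOn))
      intro t ht
      exact ((hfd t ht).derivWithin (hUD t ht))
  -- strict antitonicity of s
  have hanti : StrictAntiOn s (Set.Icc 0 T) := by
    apply strictAntiOn_of_deriv_neg (convex_Icc 0 T) hscont
    intro t ht
    rw [interior_Icc] at ht
    have hder : HasDerivAt s (F (s t + α * t)) t :=
      (hsd' t ⟨ht.1.le, ht.2.le⟩).hasDerivAt (Icc_mem_nhds ht.1 ht.2)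
    rw [hder.deriv]
    exact hFneg _
  refine ⟨s, ⟨creg s hsd', hs0, hsd⟩, ?_, fun t ht => ⟨hFgt _, hFneg _⟩, hanti, ?_⟩
  · -- uniqueness
    rintro s' ⟨hs'c, hs'0, hs'd⟩
    have hs'd' : ∀ t ∈ Set.Icc (0:ℝ) T, HasDerivWithinAt s' (F (s' t + α * t)) (Set.Icc 0 T) t :=
      fun t ht => hs'd t ht
    apply ODE_solution_unique_of_mem_Icc_right (v := v)
      (s := fun t => {x | x + α * t ∈ J}) (K := L) (fun t _ => hlip t)
      (hs'c.continuousOn) ?_ ?_ hscont ?_ ?_ (by rw [hs'0, hs0])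
    · intro t ht
      exact (hs'd' t ⟨ht.1, ht.2.le⟩).mono_of_mem_nhdsWithin
        (Icc_mem_nhdsGE_of_mem ht)
    · intro t ht
      exact hmem s' hs'0 hs'd' t ⟨ht.1, ht.2.le⟩
    · intro t ht
      exact (hsd' t ⟨ht.1, ht.2.le⟩).mono_of_mem_nhdsWithin
        (Icc_mem_nhdsGE_of_mem ht)
    · intro t ht
      exact hmem s hs0 hsd' t ⟨ht.1, ht.2.le⟩
  · -- the bounds s₀ ≤ s t + α t ≤ 1
    intro t ht
    have h := apriori s hs0 hsd' t ht
    rw [abs_le] at h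
    have hle : s t ≤ s₀ := by
      rcases eq_or_lt_of_le ht.1 with h0 | h0
      · rw [← h0, hs0]
      · exact le_of_lt (by
          have := hanti (Set.left_mem_Icc.2 hTpos.le) ht h0
          rwa [hs0] at this)
    have h2 : α * t ≤ R := mul_le_mul_of_nonneg_left ht.2 hα.le
    have h3 : R = 1 - s₀ := hαT
    constructor <;> linarith
end

section
/- Let α, β > 0, s₀ ∈ (0, 1/2], T = (1−s₀)/α, and let g : ℝ → ℝ be continuously differentiable and satisfy 2αβ < g(x) < α² + αβ for all x ∈ ℝ. If s is the solution on [0,T] of the free-boundary ODE with s(0) = s₀, then s is twice continuously differentiable on [0,T] and its second derivative satisfies s̈(t) = g′(s(t)+αt)·(ṡ(t)+α) / ( 2ṡ(t) − (α+β) ) for all t ∈ [0,T]. -/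
/-!
STATEMENT 5: Under hypothesis (H3), the solution `s` of the free-boundary ODE
`ṡ = (α+β)/2 − √(((α+β)/2)² + g(s+αt) − αβ)` on `[0,T]`, `T = (1−s₀)/α`, is
twice continuously differentiable and its second derivative satisfies
`s̈(t) = g′(s+αt)·(ṡ+α)/(2ṡ − (α+β))`.  Here `ṡ(t)` is the right-hand side of
the ODE evaluated at `(s t, t)`.
-/

theorem free_boundary_ode_second_derivative (α β s₀ T : ℝ) (g : ℝ → ℝ) (s : ℝ → ℝ)
    (hα : 0 < α) (hβ : 0 < β) (hs₀ : s₀ ∈ Set.Ioc 0 (1 / 2 : ℝ))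
    (hT : T = (1 - s₀) / α) (hg : ContDiff ℝ 1 g)
    (hgl : ∀ x : ℝ, 2 * α * β < g x) (hgu : ∀ x : ℝ, g x < α ^ 2 + α * β)
    (hs0 : s 0 = s₀)
    (hODE : ∀ t ∈ Set.Icc 0 T, HasDerivWithinAt s
      ((α + β) / 2 - Real.sqrt (((α + β) / 2) ^ 2 + g (s t + α * t) - α * β))
      (Set.Icc 0 T) t) :
    ContDiffOn ℝ 2 s (Set.Icc 0 T) ∧
    ∀ t ∈ Set.Icc 0 T,
      HasDerivWithinAt
        (fun τ => (α + β) / 2 - Real.sqrt (((α + β) / 2) ^ 2 + g (s τ + α * τ) - α * β))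
        (deriv g (s t + α * t) *
            (((α + β) / 2 - Real.sqrt (((α + β) / 2) ^ 2 + g (s t + α * t) - α * β)) + α) /
          (2 * ((α + β) / 2 - Real.sqrt (((α + β) / 2) ^ 2 + g (s t + α * t) - α * β))
            - (α + β)))
        (Set.Icc 0 T) t := by
  set I := Set.Icc (0 : ℝ) T with hI
  have hT0 : 0 < T := by
    rw [hT]
    have h1 := hs₀.2
    have : (0:ℝ) < 1 - s₀ := by linarith
    positivity
  have hUD : UniqueDiffOn ℝ I := uniqueDiffOn_Icc hT0
  have hFpos : ∀ x : ℝ, 0 < ((α + β) / 2) ^ 2 + g x - α * β := by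
    intro x
    have := hgl x
    nlinarith [sq_nonneg (α - β), mul_pos hα hβ]
  have hdiff : DifferentiableOn ℝ s I := fun t ht =>
    (hODE t ht).differentiableWithinAt
  -- the RHS function
  set f : ℝ → ℝ := fun τ => (α + β) / 2 -
    Real.sqrt (((α + β) / 2) ^ 2 + g (s τ + α * τ) - α * β) with hf
  have hderivW : ∀ t ∈ I, derivWithin s I t = f t := fun t ht =>
    (hODE t ht).derivWithin (hUD t ht)
  -- smoothness transfer
  have hinnerC : ∀ (n : ℕ), (n : WithTop ℕ∞) ≤ 1 → ContDiffOn ℝ n s I → ContDiffOn ℝ n f I := by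
    intro n hn hs
    have h1 : ContDiffOn ℝ n (fun τ => s τ + α * τ) I :=
      hs.add ((contDiff_const.mul contDiff_id).contDiffOn)
    have h2 : ContDiffOn ℝ n (fun τ => ((α + β) / 2) ^ 2 + g (s τ + α * τ) - α * β) I :=
      (contDiffOn_const.add ((hg.of_le hn).comp_contDiffOn h1)).sub contDiffOn_const
    exact contDiffOn_const.sub (h2.sqrt fun x _ => (hFpos _).ne')
  have hs1 : ContDiffOn ℝ 1 s I := by
    rw [show (1 : WithTop ℕ∞) = 0 + 1 by norm_num,
      contDiffOn_succ_iff_derivWithin hUD]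
    refine ⟨hdiff, by simp, ?_⟩
    exact (hinnerC 0 (by norm_num) (contDiffOn_zero.mpr hdiff.continuousOn)).congr hderivW
  have hf1 : ContDiffOn ℝ 1 f I := hinnerC 1 le_rfl hs1
  constructor
  · rw [show (2 : WithTop ℕ∞) = 1 + 1 by norm_num,
      contDiffOn_succ_iff_derivWithin hUD]
    exact ⟨hdiff, by simp, hf1.congr hderivW⟩
  · intro t ht
    set x := s t + α * t with hx
    set sd := (α + β) / 2 - Real.sqrt (((α + β) / 2) ^ 2 + g x - α * β) with hsd
    have hF : 0 < ((α + β) / 2) ^ 2 + g x - α * β := hFpos x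
    have hsq : 0 < Real.sqrt (((α + β) / 2) ^ 2 + g x - α * β) := Real.sqrt_pos.mpr hF
    have h1 : HasDerivWithinAt (fun τ => s τ + α * τ) (sd + α) I t := by
      have := (hODE t ht).add (((hasDerivAt_id t).const_mul α).hasDerivWithinAt)
      simp only [mul_one] at this
      exact this
    have hg' : HasDerivAt g (deriv g x) x :=
      ((hg.differentiable one_ne_zero) x).hasDerivAt
    have h2 : HasDerivWithinAt (fun τ => g (s τ + α * τ)) (deriv g x * (sd + α)) I t :=
      hg'.comp_hasDerivWithinAt t h1
    have h3 : HasDerivWithinAt (fun τ => ((α + β) / 2) ^ 2 + g (s τ + α * τ) - α * β)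
        (deriv g x * (sd + α)) I t := (h2.const_add _).sub_const _
    have h4 := (Real.hasDerivAt_sqrt hF.ne').comp_hasDerivWithinAt t h3
    have h5 := h4.const_sub ((α + β) / 2)
    convert h5 using 1
    · rfl
    · rfl
    · rfl
    have hne : Real.sqrt (((α + β) / 2) ^ 2 + g x - α * β) ≠ 0 := hsq.ne'
    rw [hsd]
    field_simp
    ring
end

section
/- Let α > 0, s₀ ∈ (0, 1/2], 0 < T ≤ (1−s₀)/α, let u_{in0}, u_{in1} be continuous on [s₀,1], and let μ, u₀, u₁, w be as defined in the context. Then the function u(x,t) = w(x,t) + ( u₀(x−αt) + u₀(x+αt) )/2 + (1/(2α))·∫_{x−αt}^{x+αt} u₁(η) dη satisfies the boundary condition u(1,t) = μ(t) for every t ∈ (0,T]; that is, the odd reflection of the data about x = 1 together with the correction term w enforces the prescribed boundary value μ(t) = u_{in1}(1)·t + u_{in0}(1) at x = 1. -/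
open MeasureTheory intervalIntegral

/-!
STATEMENT 8: The D'Alembert representation
`u(x,t) = w(x,t) + (u₀(x−αt)+u₀(x+αt))/2 + (1/(2α))∫_{x−αt}^{x+αt} u₁`
(with `u₀, u₁` the odd extensions of the data about `x = 1` and `w` the
boundary-correction term) satisfies the boundary condition
`u(1,t) = μ(t) = u_{in1}(1)·t + u_{in0}(1)` for every `t ∈ (0,T]`.
-/

/-- Odd extension about `x = 1`: equals `f x` for `x ≤ 1` and `−f (2−x)` for `x > 1`. -/
noncomputable def oddExt (f : ℝ → ℝ) (x : ℝ) : ℝ :=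
  if x ≤ 1 then f x else -f (2 - x)

/-- The correction term `w(x,t) = μ((x+αt−1)/α)` if `x+αt ≥ 1`, else `0`,
where `μ(t) = u_{in1}(1)·t + u_{in0}(1)`. -/
noncomputable def wFun (α : ℝ) (uin0 uin1 : ℝ → ℝ) (x t : ℝ) : ℝ :=
  if 1 ≤ x + α * t then uin1 1 * ((x + α * t - 1) / α) + uin0 1 else 0

/-- The D'Alembert representation formula in the region `D_T^{(I)}`. -/
lemma integral_oddExt_zero (g : ℝ → ℝ) (s₀ a : ℝ)
    (hg : ContinuousOn g (Set.Icc s₀ 1)) (ha : 0 < a) (ha' : a ≤ 1 - s₀) :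
    ∫ η in (1 - a)..(1 + a), oddExt g η = 0 := by
  have hsub : Set.Icc (1 - a) 1 ⊆ Set.Icc s₀ 1 := Set.Icc_subset_Icc (by linarith) le_rfl
  have hle : (1 - a : ℝ) ≤ 1 := by linarith
  have heq1 : Set.EqOn (oddExt g) g (Set.Icc (1 - a) 1) := fun x hx => if_pos hx.2
  have hcont1 : ContinuousOn (oddExt g) (Set.Icc (1 - a) 1) :=
    (hg.mono hsub).congr heq1
  have hint1 : IntervalIntegrable (oddExt g) volume (1 - a) 1 := by
    apply ContinuousOn.intervalIntegrable
    rwa [Set.uIcc_of_le hle]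
  have hcont2 : ContinuousOn (fun x => -g (2 - x)) (Set.Icc 1 (1 + a)) := by
    apply ContinuousOn.neg
    apply hg.comp (Continuous.continuousOn (by continuity))
    intro x hx
    simp only [Set.mem_Icc] at hx ⊢
    constructor <;> linarith [hx.1, hx.2]
  have hint2 : IntervalIntegrable (oddExt g) volume 1 (1 + a) := by
    rw [intervalIntegrable_iff_integrableOn_Ioc_of_le (by linarith)]
    apply MeasureTheory.IntegrableOn.congr_fun
      ((hcont2.integrableOn_Icc).mono_set Set.Ioc_subset_Icc_self)
      ?_ measurableSet_Ioc
    intro x hx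
    exact (if_neg (not_le.2 hx.1)).symm
  have h1 : ∫ η in (1 - a)..(1 : ℝ), oddExt g η = ∫ η in (1 - a)..(1 : ℝ), g η := by
    apply intervalIntegral.integral_congr
    rwa [Set.uIcc_of_le hle]
  have h2 : ∫ η in (1 : ℝ)..(1 + a), oddExt g η
      = ∫ η in (1 : ℝ)..(1 + a), -g (2 - η) := by
    apply intervalIntegral.integral_congr_ae
    filter_upwards with x hx
    rw [Set.uIoc_of_le (by linarith : (1:ℝ) ≤ 1 + a)] at hx
    exact if_neg (not_le.2 hx.1)
  have h3 : ∫ η in (1 : ℝ)..(1 + a), g (2 - η) = ∫ η in (1 - a)..(1 : ℝ), g η := by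
    have := intervalIntegral.integral_comp_sub_left (a := (1:ℝ)) (b := 1 + a) g 2
    have e1 : (2 : ℝ) - (1 + a) = 1 - a := by ring
    have e2 : (2 : ℝ) - 1 = 1 := by ring
    rw [e1, e2] at this
    exact this
  rw [← intervalIntegral.integral_add_adjacent_intervals hint1 hint2, h1, h2,
    intervalIntegral.integral_neg, h3]
  ring

/-- The D'Alembert representation formula in the region `D_T^{(I)}`. -/
noncomputable def dAlembert (α : ℝ) (uin0 uin1 : ℝ → ℝ) (x t : ℝ) : ℝ :=
  wFun α uin0 uin1 x t + (oddExt uin0 (x - α * t) + oddExt uin0 (x + α * t)) / 2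
    + (1 / (2 * α)) * ∫ η in (x - α * t)..(x + α * t), oddExt uin1 η

theorem dAlembert_boundary_value (α s₀ T : ℝ) (uin0 uin1 : ℝ → ℝ)
    (hα : 0 < α) (hs₀ : s₀ ∈ Set.Ioc 0 (1 / 2 : ℝ))
    (hT : 0 < T) (hT' : T ≤ (1 - s₀) / α)
    (h0 : ContinuousOn uin0 (Set.Icc s₀ 1))
    (h1 : ContinuousOn uin1 (Set.Icc s₀ 1)) :
    ∀ t ∈ Set.Ioc 0 T, dAlembert α uin0 uin1 1 t = uin1 1 * t + uin0 1 := by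
  intro t ht
  have hat : 0 < α * t := mul_pos hα ht.1
  have hat' : α * t ≤ 1 - s₀ := by
    have h := (le_div_iff₀ hα).mp hT'
    nlinarith [ht.2]
  have hw : wFun α uin0 uin1 1 t = uin1 1 * t + uin0 1 := by
    rw [wFun, if_pos (by linarith)]
    have : (1 + α * t - 1) / α = t := by field_simp; ring
    rw [this]
  have h0sum : oddExt uin0 (1 - α * t) + oddExt uin0 (1 + α * t) = 0 := by
    rw [oddExt, oddExt, if_pos (by linarith), if_neg (by intro h; linarith)]
    have : (2 : ℝ) - (1 + α * t) = 1 - α * t := by ring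
    rw [this]; ring
  have hI : ∫ η in (1 - α * t)..(1 + α * t), oddExt uin1 η = 0 :=
    integral_oddExt_zero uin1 s₀ (α * t) h1 hat hat'
  rw [dAlembert, hw, h0sum, hI]
  ring
end

section
/- Let α > 0, s₀ ∈ (0, 1/2], 0 < T ≤ (1−s₀)/α, let u_{in0} be C² and u_{in1} be C¹ on [s₀,1], let u₀, u₁, w be as defined in the context, and let s : [0,T] → ℝ be twice continuously differentiable with s(0) = s₀ and −α < ṡ < 0. Let t̂(x,t) be the unique solution of s(t̂) − αt̂ = x − αt and define, on the region D^{(II)} = {(x,t) : 0 < t < T, s(t) < x < s₀ + αt}, u(x,t) = w(x,t) + ( u₀(x+αt) − u₀(s(t̂)+αt̂) )/2 + (1/(2α))·∫_{s(t̂)+αt̂}^{x+αt} u₁(η) dη. Then for every t ∈ (0,T) the boundary value of ∂u/∂x at the free boundary is ∂u/∂x (s(t), t) = ( α·u_{in0}′(s(t)+αt) + u_{in1}(s(t)+αt) ) / ( α − ṡ(t) ). -/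
open MeasureTheory intervalIntegral

theorem normal_derivative_at_free_boundary (α s₀ T : ℝ)
    (uin0 uin1 uin0' uin0'' uin1' : ℝ → ℝ) (s s' s'' : ℝ → ℝ) (th : ℝ × ℝ → ℝ)
    (hα : 0 < α) (hs₀ : s₀ ∈ Set.Ioc 0 (1 / 2 : ℝ))
    (hT : 0 < T) (hT' : T ≤ (1 - s₀) / α)
    -- `u_{in0}` is C² on `[s₀,1]`, with derivatives `uin0'`, `uin0''`
    (huin0' : ∀ x ∈ Set.Icc s₀ 1, HasDerivWithinAt uin0 (uin0' x) (Set.Icc s₀ 1) x)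
    (huin0'' : ∀ x ∈ Set.Icc s₀ 1, HasDerivWithinAt uin0' (uin0'' x) (Set.Icc s₀ 1) x)
    (huin0''c : ContinuousOn uin0'' (Set.Icc s₀ 1))
    -- `u_{in1}` is C¹ on `[s₀,1]`, with derivative `uin1'`
    (huin1' : ∀ x ∈ Set.Icc s₀ 1, HasDerivWithinAt uin1 (uin1' x) (Set.Icc s₀ 1) x)
    (huin1'c : ContinuousOn uin1' (Set.Icc s₀ 1))
    -- `s` is C² on `[0,T]` with `s(0) = s₀` and `−α < ṡ < 0`
    (hs0 : s 0 = s₀)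
    (hs' : ∀ t ∈ Set.Icc (0 : ℝ) T, HasDerivWithinAt s (s' t) (Set.Icc 0 T) t)
    (hs'' : ∀ t ∈ Set.Icc (0 : ℝ) T, HasDerivWithinAt s' (s'' t) (Set.Icc 0 T) t)
    (hs''c : ContinuousOn s'' (Set.Icc 0 T))
    (hsb : ∀ t ∈ Set.Icc (0 : ℝ) T, -α < s' t ∧ s' t < 0)
    -- `t̂` solves `s(t̂) − α t̂ = x − αt` with `t̂ ∈ [0,t]`
    (hth : ∀ x t : ℝ, 0 ≤ t → t ≤ T → s t ≤ x → x ≤ s₀ + α * t →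
      th (x, t) ∈ Set.Icc 0 t ∧ s (th (x, t)) - α * th (x, t) = x - α * t) :
    ∀ t ∈ Set.Ioo (0 : ℝ) T,
      HasDerivWithinAt
        (fun x => wFun α uin0 uin1 x t
          + (oddExt uin0 (x + α * t) - oddExt uin0 (s (th (x, t)) + α * th (x, t))) / 2
          + (1 / (2 * α)) *
              ∫ η in (s (th (x, t)) + α * th (x, t))..(x + α * t), oddExt uin1 η)
        ((α * uin0' (s t + α * t) + uin1 (s t + α * t)) / (α - s' t))
        (Set.Ici (s t)) (s t) := by
  intro t ht
  obtain ⟨ht0, htT⟩ := ht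
  have htmem : t ∈ Set.Icc (0:ℝ) T := ⟨ht0.le, htT.le⟩
  obtain ⟨hs₀0, hs₀half⟩ := hs₀
  have hs'neg : s' t < 0 := (hsb t htmem).2
  have hs'lb : -α < s' t := (hsb t htmem).1
  set x₀ := s t with hx₀def
  set y₀ := s t + α * t with hy₀def
  -- continuity and derivatives of s
  have hscont : ContinuousOn s (Set.Icc 0 T) := fun τ hτ => (hs' τ hτ).continuousWithinAt
  have hsderiv : ∀ τ ∈ Set.Ioo (0:ℝ) T, HasDerivAt s (s' τ) τ := fun τ hτ =>
    (hs' τ ⟨hτ.1.le, hτ.2.le⟩).hasDerivAt (Icc_mem_nhds hτ.1 hτ.2)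
  -- s is strictly decreasing
  have hanti : StrictAntiOn s (Set.Icc 0 T) := by
    apply strictAntiOn_of_deriv_neg (convex_Icc 0 T) hscont
    intro τ hτ
    rw [interior_Icc] at hτ
    rw [(hsderiv τ hτ).deriv]
    exact (hsb τ ⟨hτ.1.le, hτ.2.le⟩).2
  -- g τ = s τ + α τ is strictly increasing
  have hgmono : StrictMonoOn (fun τ => s τ + α * τ) (Set.Icc 0 T) := by
    apply strictMonoOn_of_deriv_pos (convex_Icc 0 T)
    · exact hscont.add (continuous_const.mul continuous_id).continuousOn
    · intro τ hτ
      rw [interior_Icc] at hτ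
      have hg : HasDerivAt (fun τ => s τ + α * τ) (s' τ + α) τ :=
        (hsderiv τ hτ).add (by simpa using (hasDerivAt_id τ).const_mul α)
      rw [hg.deriv]
      linarith [(hsb τ ⟨hτ.1.le, hτ.2.le⟩).1]
  -- s is α-Lipschitz
  have hlip : ∀ a ∈ Set.Icc (0:ℝ) T, ∀ b ∈ Set.Icc (0:ℝ) T, |s b - s a| ≤ α * |b - a| := by
    intro a ha b hb
    have hC : ∀ x ∈ Set.Icc (0:ℝ) T, ‖s' x‖ ≤ α := by
      intro x hx
      have h1 := (hsb x hx).1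
      have h2 := (hsb x hx).2
      rw [Real.norm_eq_abs, abs_le]
      constructor <;> linarith
    have := Convex.norm_image_sub_le_of_norm_hasDerivWithin_le hs' hC (convex_Icc 0 T) ha hb
    simpa [Real.norm_eq_abs] using this
  have hx₀lt : x₀ < s₀ := by
    have := hanti ⟨le_refl 0, hT.le⟩ htmem ht0
    rwa [hs0] at this
  have hy₀gt : s₀ < y₀ := by
    have := hgmono ⟨le_refl 0, hT.le⟩ htmem ht0
    simp only [hs0, mul_zero, add_zero] at this
    exact this
  have hαT : α * t < 1 - s₀ := by
    have h1 : α * t < α * T := by nlinarith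
    have h2 : α * T ≤ 1 - s₀ := by
      rw [le_div_iff₀ hα] at hT'
      linarith [mul_comm T α]
    linarith
  have hy₀lt : y₀ < 1 := by
    rw [hy₀def]; linarith
  set δ := (1 - y₀) / 2 with hδdef
  have hδpos : 0 < δ := by rw [hδdef]; linarith
  set c := min (s₀ + α * t) (x₀ + δ) with hcdef
  have hx₀c : x₀ < c := lt_min (by linarith) (by linarith)
  set S := Set.Icc x₀ c with hSdef
  set θ : ℝ → ℝ := fun x => th (x, t) with hθdef
  -- basic facts about θ on S
  have hθfact : ∀ x ∈ S, θ x ∈ Set.Icc 0 t ∧ s (θ x) - α * θ x = x - α * t := by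
    intro x hx
    exact hth x t ht0.le htT.le hx.1 (le_trans hx.2 (min_le_left _ _))
  have hθT : ∀ x ∈ S, θ x ∈ Set.Icc (0:ℝ) T := fun x hx =>
    ⟨(hθfact x hx).1.1, le_trans (hθfact x hx).1.2 htT.le⟩
  -- lower estimate : α (t - θ x) ≤ x - x₀
  have hlow : ∀ x ∈ S, α * (t - θ x) ≤ x - x₀ := by
    intro x hx
    have h1 : s t ≤ s (θ x) := by
      rcases eq_or_lt_of_le (hθfact x hx).1.2 with h | h
      · rw [h]
      · exact (hanti (hθT x hx) htmem h).le
    have h2 := (hθfact x hx).2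
    linarith
  -- upper estimate : x - x₀ ≤ 2 α (t - θ x)
  have hup : ∀ x ∈ S, x - x₀ ≤ 2 * α * (t - θ x) := by
    intro x hx
    have h1 : |s (θ x) - s t| ≤ α * |θ x - t| := hlip t htmem (θ x) (hθT x hx)
    have h2 := (hθfact x hx).2
    have h3 : θ x ≤ t := (hθfact x hx).1.2
    have h4 : s (θ x) - s t ≤ α * (t - θ x) := by
      have := abs_le.mp h1
      rw [abs_of_nonpos (by linarith : θ x - t ≤ 0)] at this
      linarith [this.2]
    linarith
  -- θ x₀ = t
  have hx₀S : x₀ ∈ S := ⟨le_refl x₀, hx₀c.le⟩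
  have hθx₀ : θ x₀ = t := by
    have h1 := hlow x₀ hx₀S
    have h2 : θ x₀ ≤ t := (hθfact x₀ hx₀S).1.2
    nlinarith
  -- θ tends to t within Icc 0 T \ {t}
  have hθtend : Filter.Tendsto θ (nhdsWithin x₀ (S \ {x₀}))
      (nhdsWithin t (Set.Icc 0 T \ {t})) := by
    apply tendsto_nhdsWithin_of_tendsto_nhds_of_eventually_within
    · -- θ → t
      have hdiff : Filter.Tendsto (fun x => t - θ x) (nhdsWithin x₀ (S \ {x₀})) (nhds 0) := by
        have hupper : Filter.Tendsto (fun x : ℝ => (x - x₀) / α)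
            (nhdsWithin x₀ (S \ {x₀})) (nhds 0) := by
          have h1 : Filter.Tendsto (fun x : ℝ => (x - x₀) / α) (nhds x₀)
              (nhds ((x₀ - x₀) / α)) :=
            Filter.Tendsto.div_const (Filter.Tendsto.sub_const (fun u hu => hu) x₀) α
          rw [sub_self, zero_div] at h1
          exact h1.mono_left nhdsWithin_le_nhds
        refine tendsto_of_tendsto_of_tendsto_of_le_of_le'
          (tendsto_const_nhds : Filter.Tendsto (fun _ : ℝ => (0:ℝ)) _ _) hupper ?_ ?_
        · filter_upwards [eventually_mem_nhdsWithin] with x hx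
          have := (hθfact x hx.1).1.2
          linarith
        · filter_upwards [eventually_mem_nhdsWithin] with x hx
          rw [le_div_iff₀ hα]
          have := hlow x hx.1
          nlinarith
      have h2 : Filter.Tendsto (fun x => t - (t - θ x)) (nhdsWithin x₀ (S \ {x₀}))
          (nhds (t - 0)) := Filter.Tendsto.sub tendsto_const_nhds hdiff
      simpa using h2
    · filter_upwards [eventually_mem_nhdsWithin] with x hx
      constructor
      · exact hθT x hx.1
      · simp only [Set.mem_singleton_iff]
        intro habs
        have hxgt : x₀ < x := lt_of_le_of_ne hx.1.1 (Ne.symm hx.2)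
        have := hup x hx.1
        rw [habs] at this
        simp at this
        linarith
  -- derivative of θ at x₀ within S
  have hhd : HasDerivWithinAt (fun τ => s τ - α * τ) (s' t - α) (Set.Icc 0 T) t :=
    (hs' t htmem).sub (by simpa using (hasDerivWithinAt_id t (Set.Icc 0 T)).const_mul α)
  have hne : s' t - α ≠ 0 := by intro h; linarith
  have hθderiv : HasDerivWithinAt θ ((s' t - α)⁻¹) S x₀ := by
    rw [hasDerivWithinAt_iff_tendsto_slope]
    have hslope := hasDerivWithinAt_iff_tendsto_slope.mp hhd
    have hinv : Filter.Tendsto (fun x => (slope (fun τ => s τ - α * τ) t (θ x))⁻¹)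
        (nhdsWithin x₀ (S \ {x₀})) (nhds (s' t - α)⁻¹) :=
      (hslope.comp hθtend).inv₀ hne
    apply hinv.congr'
    filter_upwards [eventually_mem_nhdsWithin] with x hx
    obtain ⟨hxS, hxne⟩ := hx
    have hxne' : x ≠ x₀ := hxne
    have h2 := (hθfact x hxS).2
    rw [slope_def_field, slope_def_field, inv_div]
    have hnum : s (θ x) - α * θ x - (s t - α * t) = x - x₀ := by linarith
    rw [hnum, hθx₀]
  -- derivative of x ↦ s (θ x) + α * θ x at x₀ within S
  have hgd : HasDerivWithinAt (fun τ => s τ + α * τ) (s' t + α) (Set.Icc 0 T) t :=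
    (hs' t htmem).add (by simpa using (hasDerivWithinAt_id t (Set.Icc 0 T)).const_mul α)
  have hbd : HasDerivWithinAt (fun x => s (θ x) + α * θ x)
      ((s' t + α) * (s' t - α)⁻¹) S x₀ := by
    have hmaps : Set.MapsTo θ S (Set.Icc 0 T) := fun x hx => hθT x hx
    have hgd' : HasDerivWithinAt (fun τ => s τ + α * τ) (s' t + α) (Set.Icc 0 T) (θ x₀) := by
      rw [hθx₀]; exact hgd
    have := HasDerivWithinAt.comp (x := x₀) hgd' hθderiv hmaps
    simpa [Function.comp_def] using this
  -- the primitive Φ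
  have hy₀Icc : y₀ ∈ Set.Icc s₀ 1 := ⟨hy₀gt.le, hy₀lt.le⟩
  have huin1cont : ContinuousOn uin1 (Set.Icc s₀ 1) := fun y hy =>
    (huin1' y hy).continuousWithinAt
  have hoddcont : ContinuousOn (oddExt uin1) (Set.Ioo s₀ 1) := by
    apply ContinuousOn.congr (huin1cont.mono Set.Ioo_subset_Icc_self)
    intro y hy
    simp [oddExt, hy.2.le]
  have hΦint : HasDerivAt (fun y => ∫ η in y₀..y, oddExt uin1 η) (oddExt uin1 y₀) y₀ :=
    intervalIntegral.integral_hasDerivAt_right IntervalIntegrable.refl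
      (hoddcont.stronglyMeasurableAtFilter isOpen_Ioo y₀ ⟨hy₀gt, hy₀lt⟩)
      (hoddcont.continuousAt (Ioo_mem_nhds hy₀gt hy₀lt))
  have hu0d : HasDerivAt (oddExt uin0) (uin0' y₀) y₀ := by
    have h1 : HasDerivAt uin0 (uin0' y₀) y₀ :=
      (huin0' y₀ hy₀Icc).hasDerivAt (Icc_mem_nhds hy₀gt hy₀lt)
    apply h1.congr_of_eventuallyEq
    filter_upwards [Iio_mem_nhds hy₀lt] with y hy
    simp [oddExt, (Set.mem_Iio.mp hy).le]
  have hΦ : HasDerivAt (fun y => oddExt uin0 y / 2 + (1/(2*α)) * ∫ η in y₀..y, oddExt uin1 η)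
      (uin0' y₀ / 2 + (1/(2*α)) * uin1 y₀) y₀ := by
    have := (hu0d.div_const 2).add (hΦint.const_mul (1/(2*α)))
    have he : oddExt uin1 y₀ = uin1 y₀ := by simp [oddExt, hy₀lt.le]
    rw [he] at this
    exact this
  -- derivative of the a-part
  have had : HasDerivWithinAt (fun x : ℝ => x + α * t) (1:ℝ) S x₀ := by
    simpa using (hasDerivWithinAt_id x₀ S).add_const (α * t)
  have hA : HasDerivWithinAt
      (fun x => oddExt uin0 (x + α * t) / 2 + (1/(2*α)) * ∫ η in y₀..(x + α * t), oddExt uin1 η)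
      ((uin0' y₀ / 2 + (1/(2*α)) * uin1 y₀) * 1) S x₀ := by
    have := hΦ.comp_hasDerivWithinAt_of_eq x₀ had rfl
    simpa [Function.comp_def] using this
  have hB : HasDerivWithinAt
      (fun x => oddExt uin0 (s (θ x) + α * θ x) / 2
        + (1/(2*α)) * ∫ η in y₀..(s (θ x) + α * θ x), oddExt uin1 η)
      ((uin0' y₀ / 2 + (1/(2*α)) * uin1 y₀) * ((s' t + α) * (s' t - α)⁻¹)) S x₀ := by
    have hval : y₀ = s (θ x₀) + α * θ x₀ := by rw [hθx₀]
    have := hΦ.comp_hasDerivWithinAt_of_eq x₀ hbd hval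
    simpa [Function.comp_def] using this
  have hΨ := hA.sub hB
  -- integrability on Icc s₀ (y₀ + δ)
  set m := y₀ + δ with hmdef
  have hm1 : m < 1 := by rw [hmdef, hδdef]; linarith
  have hcm : ContinuousOn (oddExt uin1) (Set.Icc s₀ m) := by
    apply ContinuousOn.congr (huin1cont.mono (Set.Icc_subset_Icc le_rfl hm1.le))
    intro y hy
    simp [oddExt, le_trans hy.2 hm1.le]
  have hy₀m : y₀ ∈ Set.Icc s₀ m := ⟨hy₀gt.le, by rw [hmdef]; linarith⟩
  have hint : ∀ z ∈ Set.Icc s₀ m, IntervalIntegrable (oddExt uin1) volume y₀ z := by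
    intro z hz
    exact (hcm.mono (Set.uIcc_subset_Icc hy₀m hz)).intervalIntegrable
  -- membership of endpoints
  have haS : ∀ x ∈ S, x + α * t ∈ Set.Icc s₀ m := by
    intro x hx
    constructor
    · have : x₀ + α * t = y₀ := rfl
      have := hx.1
      linarith [hy₀gt]
    · have hxc := hx.2
      have : c ≤ x₀ + δ := min_le_right _ _
      rw [hmdef]
      have : x + α * t ≤ x₀ + δ + α * t := by linarith
      rw [hy₀def]
      linarith
  have hbS : ∀ x ∈ S, s (θ x) + α * θ x ∈ Set.Icc s₀ m := by
    intro x hx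
    have hmem := hθT x hx
    have hmono := hgmono.monotoneOn
    constructor
    · have := hmono ⟨le_refl 0, hT.le⟩ hmem (hθfact x hx).1.1
      simpa [hs0] using this
    · have := hmono hmem htmem (hθfact x hx).1.2
      simp only at this
      rw [hmdef]
      rw [hy₀def] at *
      linarith [hδpos]
  -- the given function agrees with Ψ on S
  have hcongr : ∀ x ∈ S,
      (wFun α uin0 uin1 x t
        + (oddExt uin0 (x + α * t) - oddExt uin0 (s (θ x) + α * θ x)) / 2
        + (1 / (2 * α)) * ∫ η in (s (θ x) + α * θ x)..(x + α * t), oddExt uin1 η)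
      = (oddExt uin0 (x + α * t) / 2 + (1/(2*α)) * ∫ η in y₀..(x + α * t), oddExt uin1 η)
        - (oddExt uin0 (s (θ x) + α * θ x) / 2
            + (1/(2*α)) * ∫ η in y₀..(s (θ x) + α * θ x), oddExt uin1 η) := by
    intro x hx
    have hw : wFun α uin0 uin1 x t = 0 := by
      rw [wFun, if_neg]
      push_neg
      have h1 : x + α * t ∈ Set.Icc s₀ m := haS x hx
      linarith [h1.2, hm1]
    have hsplit : (∫ η in y₀..(x + α * t), oddExt uin1 η)
        - ∫ η in y₀..(s (θ x) + α * θ x), oddExt uin1 η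
        = ∫ η in (s (θ x) + α * θ x)..(x + α * t), oddExt uin1 η :=
      intervalIntegral.integral_interval_sub_left (hint _ (haS x hx)) (hint _ (hbS x hx))
    rw [hw, ← hsplit]
    ring
  -- assemble the derivative on S
  have hDeq : (α * uin0' y₀ + uin1 y₀) / (α - s' t)
      = (uin0' y₀ / 2 + (1/(2*α)) * uin1 y₀) * 1
        - (uin0' y₀ / 2 + (1/(2*α)) * uin1 y₀) * ((s' t + α) * (s' t - α)⁻¹) := by
    have h1 : α - s' t ≠ 0 := by intro h; linarith
    field_simp
    ring
  have hfinal : HasDerivWithinAt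
      (fun x => wFun α uin0 uin1 x t
        + (oddExt uin0 (x + α * t) - oddExt uin0 (s (th (x, t)) + α * th (x, t))) / 2
        + (1 / (2 * α)) *
            ∫ η in (s (th (x, t)) + α * th (x, t))..(x + α * t), oddExt uin1 η)
      ((α * uin0' y₀ + uin1 y₀) / (α - s' t)) S x₀ := by
    rw [hDeq]
    exact hΨ.congr hcongr (hcongr x₀ hx₀S)
  exact hfinal.mono_of_mem_nhdsWithin (Icc_mem_nhdsGE_of_mem ⟨le_refl x₀, hx₀c⟩)
end

section
/- Let α > 0, s₀ ∈ (0, 1/2], 0 < T ≤ (1−s₀)/α, let u_{in0} be C¹ and u_{in1} be continuous on [s₀,1], let u₀, u₁, w be as defined in the context, and let s : [0,T] → ℝ be continuously differentiable with s(0) = s₀ and −α < ṡ < 0; write ṡ₀ = ṡ(0). Define u piecewise: on D^{(I)} = {s₀+αt < x < 1} by u = w + (u₀(x−αt)+u₀(x+αt))/2 + (1/(2α))∫_{x−αt}^{x+αt} u₁, and on D^{(II)} = {s(t) < x < s₀+αt} by u = w + (u₀(x+αt) − u₀(s(t̂)+αt̂))/2 + (1/(2α))∫_{s(t̂)+αt̂}^{x+αt}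 u₁, where t̂ solves s(t̂) − αt̂ = x − αt. Then at any point (x̄,t̄) on the characteristic Σ : x − αt = s₀ with 0 < t̄ < T and x̄ + α t̄ < 1, the one-sided limits of ∂u/∂t from D^{(II)} and from D^{(I)} both exist and their difference equals ( α/(ṡ₀ − α) )·( ṡ₀·u_{in0}′(s₀) + u_{in1}(s₀) ). In particular, ∂u/∂t extends continuously across Σ if and only if ṡ₀·u_{in0}′(s₀) + u_{in1}(s₀) = 0 (condition (A)). -/
open MeasureTheory intervalIntegral Filter

/-- D'Alembert representation of `u` in `D^{(I)}`. -/
noncomputable def uRegI (α : ℝ) (uin0 uin1 : ℝ → ℝ) (x t : ℝ) : ℝ :=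
  wFun α uin0 uin1 x t + (oddExt uin0 (x - α * t) + oddExt uin0 (x + α * t)) / 2
    + (1 / (2 * α)) * ∫ η in (x - α * t)..(x + α * t), oddExt uin1 η

/-- D'Alembert representation of `u` in `D^{(II)}`, built from the hitting time `t̂`. -/
noncomputable def uRegII (α : ℝ) (uin0 uin1 s : ℝ → ℝ) (th : ℝ × ℝ → ℝ) (x t : ℝ) : ℝ :=
  wFun α uin0 uin1 x t
    + (oddExt uin0 (x + α * t) - oddExt uin0 (s (th (x, t)) + α * th (x, t))) / 2
    + (1 / (2 * α)) *
        ∫ η in (s (th (x, t)) + α * th (x, t))..(x + α * t), oddExt uin1 η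

private lemma jump_algebra_aux (α sp u0 u1 u0b u1b : ℝ) (hα0 : α ≠ 0)
    (hne : sp - α ≠ 0) :
    ((u0b * α - u0 * ((1 + 2*α * (sp - α)⁻¹) * (-α)))/2
      + (1/(2*α)) * (u1b * α - u1 * ((1 + 2*α * (sp - α)⁻¹) * (-α))))
    - ((u0 * (-α) + u0b * α)/2 + (1/(2*α)) * (u1b * α - u1 * (-α)))
    = (α / (sp - α)) * (sp * u0 + u1) := by
  field_simp
  ring

theorem jump_of_ut_across_sigma (α s₀ T : ℝ)
    (uin0 uin1 uin0' : ℝ → ℝ) (s s' : ℝ → ℝ) (th : ℝ × ℝ → ℝ)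
    (hα : 0 < α) (hs₀ : s₀ ∈ Set.Ioc 0 (1 / 2 : ℝ))
    (hT : 0 < T) (hT' : T ≤ (1 - s₀) / α)
    -- `u_{in0}` is C¹ on `[s₀,1]` with derivative `uin0'`, `u_{in1}` is continuous
    (huin0' : ∀ x ∈ Set.Icc s₀ 1, HasDerivWithinAt uin0 (uin0' x) (Set.Icc s₀ 1) x)
    (huin0'c : ContinuousOn uin0' (Set.Icc s₀ 1))
    (huin1 : ContinuousOn uin1 (Set.Icc s₀ 1))
    -- `s` is C¹ on `[0,T]` with `s(0) = s₀` and `−α < ṡ < 0`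
    (hs0 : s 0 = s₀)
    (hs' : ∀ t ∈ Set.Icc (0 : ℝ) T, HasDerivWithinAt s (s' t) (Set.Icc 0 T) t)
    (hs'c : ContinuousOn s' (Set.Icc 0 T))
    (hsb : ∀ t ∈ Set.Icc (0 : ℝ) T, -α < s' t ∧ s' t < 0)
    -- `t̂` solves `s(t̂) − α t̂ = x − αt` with `t̂ ∈ [0,t]`
    (hth : ∀ x t : ℝ, 0 ≤ t → t ≤ T → s t ≤ x → x ≤ s₀ + α * t →
      th (x, t) ∈ Set.Icc 0 t ∧ s (th (x, t)) - α * th (x, t) = x - α * t) :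
    ∀ xb tb : ℝ, 0 < tb → tb < T → xb - α * tb = s₀ → xb + α * tb < 1 →
      ∃ LI LII : ℝ,
        Tendsto (fun p : ℝ × ℝ => deriv (fun t => uRegI α uin0 uin1 p.1 t) p.2)
          (nhdsWithin (xb, tb)
            {p : ℝ × ℝ | 0 < p.2 ∧ p.2 < T ∧ s₀ + α * p.2 < p.1 ∧ p.1 < 1})
          (nhds LI) ∧
        Tendsto (fun p : ℝ × ℝ => deriv (fun t => uRegII α uin0 uin1 s th p.1 t) p.2)
          (nhdsWithin (xb, tb)
            {p : ℝ × ℝ | 0 < p.2 ∧ p.2 < T ∧ s p.2 < p.1 ∧ p.1 < s₀ + α * p.2})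
          (nhds LII) ∧
        LII - LI = (α / (s' 0 - α)) * (s' 0 * uin0' s₀ + uin1 s₀) ∧
        (LI = LII ↔ s' 0 * uin0' s₀ + uin1 s₀ = 0)     := by
  intro xb tb htb0 htbT hxb hxb1
  have hα0 : α ≠ 0 := ne_of_gt hα
  have hs₀0 : 0 < s₀ := hs₀.1
  have hs₀1 : s₀ < 1 := lt_of_le_of_lt hs₀.2 (by norm_num)
  have hT0 : (0:ℝ) ≤ T := hT.le
  have hαT : α * T ≤ 1 - s₀ := by
    have := (le_div_iff₀ hα).1 hT'
    linarith
  have hscont : ContinuousOn s (Set.Icc 0 T) := fun t ht => (hs' t ht).continuousWithinAt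
  -- derivatives of s, φ := s - α·id, h := s + α·id at interior points
  have hsdT : ∀ τ ∈ Set.Ioo (0:ℝ) T, HasDerivAt s (s' τ) τ := fun τ hτ =>
    (hs' τ (Set.Ioo_subset_Icc_self hτ)).hasDerivAt (Icc_mem_nhds hτ.1 hτ.2)
  set φ : ℝ → ℝ := fun τ => s τ - α * τ with hφdef
  set hfun : ℝ → ℝ := fun τ => s τ + α * τ with hhdef
  have hφd : ∀ τ ∈ Set.Ioo (0:ℝ) T, HasDerivAt φ (s' τ - α) τ := by
    intro τ hτ
    exact ((hsdT τ hτ).sub ((hasDerivAt_id τ).const_mul α)).congr_deriv (by ring)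
  have hhd : ∀ τ ∈ Set.Ioo (0:ℝ) T, HasDerivAt hfun (s' τ + α) τ := by
    intro τ hτ
    exact ((hsdT τ hτ).add ((hasDerivAt_id τ).const_mul α)).congr_deriv (by ring)
  have hφc : ContinuousOn φ (Set.Icc 0 T) :=
    hscont.sub ((continuous_const.mul continuous_id).continuousOn)
  have hhc : ContinuousOn hfun (Set.Icc 0 T) :=
    hscont.add ((continuous_const.mul continuous_id).continuousOn)
  have hφanti : StrictAntiOn φ (Set.Icc 0 T) := by
    apply strictAntiOn_of_deriv_neg (convex_Icc 0 T) hφc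
    intro τ hτ
    rw [interior_Icc] at hτ
    rw [(hφd τ hτ).deriv]
    have := (hsb τ (Set.Ioo_subset_Icc_self hτ)).2
    linarith
  have hhmono : StrictMonoOn hfun (Set.Icc 0 T) := by
    apply strictMonoOn_of_deriv_pos (convex_Icc 0 T) hhc
    intro τ hτ
    rw [interior_Icc] at hτ
    rw [(hhd τ hτ).deriv]
    have := (hsb τ (Set.Ioo_subset_Icc_self hτ)).1
    linarith
  have hsanti : StrictAntiOn s (Set.Icc 0 T) := by
    apply strictAntiOn_of_deriv_neg (convex_Icc 0 T) hscont
    intro τ hτ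
    rw [interior_Icc] at hτ
    rw [(hsdT τ hτ).deriv]
    exact (hsb τ (Set.Ioo_subset_Icc_self hτ)).2
  have h0mem : (0:ℝ) ∈ Set.Icc (0:ℝ) T := ⟨le_refl 0, hT0⟩
  have hφ0 : φ 0 = s₀ := by simp [hφdef, hs0]
  -- the auxiliary time T'
  set T' : ℝ := (tb + T)/2 with hT'def
  have htbT' : tb < T' := by simp only [hT'def]; linarith
  have hT'T : T' < T := by simp only [hT'def]; linarith
  have hT'0 : 0 < T' := by linarith
  have hT'mem : T' ∈ Set.Icc (0:ℝ) T := ⟨hT'0.le, hT'T.le⟩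
  have hsubT' : Set.Icc (0:ℝ) T' ⊆ Set.Icc (0:ℝ) T := Set.Icc_subset_Icc_right hT'T.le
  have hφT' : φ T' < s₀ := by
    have := hφanti h0mem hT'mem hT'0
    rwa [hφ0] at this
  -- the inverse function g of φ
  set g : ℝ → ℝ := fun y => th (y + α * T', T') with hgdef
  have hgspec : ∀ y ∈ Set.Icc (φ T') s₀, g y ∈ Set.Icc (0:ℝ) T' ∧ φ (g y) = y := by
    intro y hy
    have h1 : s T' ≤ y + α * T' := by
      have : φ T' = s T' - α * T' := rfl
      have := hy.1; linarith
    have h2 : y + α * T' ≤ s₀ + α * T' := by linarith [hy.2]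
    obtain ⟨hm, he⟩ := hth (y + α * T') T' hT'0.le hT'T.le h1 h2
    refine ⟨hm, ?_⟩
    have : φ (g y) = s (g y) - α * g y := rfl
    rw [this]
    simp only [hgdef]
    linarith
  have hguniq : ∀ τ ∈ Set.Icc (0:ℝ) T, ∀ y ∈ Set.Icc (φ T') s₀, φ τ = y → g y = τ := by
    intro τ hτ y hy he
    exact hφanti.injOn (hsubT' (hgspec y hy).1) hτ ((hgspec y hy).2.trans he.symm)
  have hgs₀ : g s₀ = 0 := hguniq 0 h0mem s₀ ⟨hφT'.le, le_refl s₀⟩ hφ0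
  have hglt : ∀ y ∈ Set.Icc (φ T') s₀, ∀ ε ∈ Set.Icc (0:ℝ) T, φ ε < y → g y < ε := by
    intro y hy ε hε hlt
    by_contra hc
    push_neg at hc
    rcases eq_or_lt_of_le hc with h | h
    · rw [h, (hgspec y hy).2] at hlt; exact lt_irrefl _ hlt
    · have := hφanti hε (hsubT' (hgspec y hy).1) h
      rw [(hgspec y hy).2] at this; linarith
  have hggt : ∀ y ∈ Set.Icc (φ T') s₀, ∀ ε ∈ Set.Icc (0:ℝ) T, y < φ ε → ε < g y := by
    intro y hy ε hε hlt
    by_contra hc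
    push_neg at hc
    rcases eq_or_lt_of_le hc with h | h
    · rw [← h, (hgspec y hy).2] at hlt; exact lt_irrefl _ hlt
    · have := hφanti (hsubT' (hgspec y hy).1) hε h
      rw [(hgspec y hy).2] at this; linarith
  have hgpos : ∀ y ∈ Set.Icc (φ T') s₀, y < s₀ → 0 < g y := by
    intro y hy hlt
    rcases eq_or_lt_of_le (hgspec y hy).1.1 with h | h
    · exfalso
      have : φ (g y) = y := (hgspec y hy).2
      rw [← h, hφ0] at this
      linarith
    · exact h
  have hgltT' : ∀ y ∈ Set.Icc (φ T') s₀, φ T' < y → g y < T' :=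
    fun y hy h => hglt y hy T' hT'mem h
  -- continuity of g at interior points
  have hgcont : ∀ a ∈ Set.Ioo (φ T') s₀, ContinuousAt g a := by
    intro a ha
    have haI : a ∈ Set.Icc (φ T') s₀ := Set.Ioo_subset_Icc_self ha
    have hτ0 : 0 < g a := hgpos a haI ha.2
    have hτT' : g a < T' := hgltT' a haI ha.1
    have hφga : φ (g a) = a := (hgspec a haI).2
    rw [Metric.continuousAt_iff]
    intro ε hε
    set ε₁ : ℝ := min (ε/2) (min (g a/2) ((T' - g a)/2)) with hε₁def
    have he1 : ε₁ ≤ ε/2 := min_le_left _ _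
    have he2 : ε₁ ≤ g a/2 := le_trans (min_le_right _ _) (min_le_left _ _)
    have he3 : ε₁ ≤ (T' - g a)/2 := le_trans (min_le_right _ _) (min_le_right _ _)
    have hε₁0 : 0 < ε₁ := lt_min (by linarith) (lt_min (by linarith) (by linarith))
    have hlm : g a - ε₁ ∈ Set.Icc (0:ℝ) T := ⟨by linarith, by linarith⟩
    have hrm : g a + ε₁ ∈ Set.Icc (0:ℝ) T := ⟨by linarith, by linarith⟩
    have h1 : a < φ (g a - ε₁) := by
      have := hφanti hlm (hsubT' (hgspec a haI).1) (by linarith)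
      rwa [hφga] at this
    have h2 : φ (g a + ε₁) < a := by
      have := hφanti (hsubT' (hgspec a haI).1) hrm (by linarith)
      rwa [hφga] at this
    refine ⟨min (φ (g a - ε₁) - a) (min (a - φ (g a + ε₁)) (min (a - φ T') (s₀ - a))), ?_, ?_⟩
    · have := ha.1; have := ha.2
      exact lt_min (by linarith) (lt_min (by linarith) (lt_min (by linarith) (by linarith)))
    · intro y hy
      rw [Real.dist_eq] at hy
      have hd1 : |y - a| < φ (g a - ε₁) - a := lt_of_lt_of_le hy (min_le_left _ _)
      have hd2 : |y - a| < a - φ (g a + ε₁) :=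
        lt_of_lt_of_le hy (le_trans (min_le_right _ _) (min_le_left _ _))
      have hd3 : |y - a| < a - φ T' :=
        lt_of_lt_of_le hy (le_trans (min_le_right _ _) (le_trans (min_le_right _ _) (min_le_left _ _)))
      have hd4 : |y - a| < s₀ - a :=
        lt_of_lt_of_le hy (le_trans (min_le_right _ _) (le_trans (min_le_right _ _) (min_le_right _ _)))
      rw [abs_lt] at hd1 hd2 hd3 hd4
      have hyI : y ∈ Set.Icc (φ T') s₀ := ⟨by linarith [hd3.1], by linarith [hd4.2]⟩
      have hg1 : g y < g a + ε₁ := hglt y hyI (g a + ε₁) hrm (by linarith [hd2.1])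
      have hg2 : g a - ε₁ < g y := hggt y hyI (g a - ε₁) hlm (by linarith [hd1.2])
      rw [Real.dist_eq, abs_lt]
      constructor <;> linarith
  have hs'ne : ∀ τ ∈ Set.Icc (0:ℝ) T, s' τ - α ≠ 0 := by
    intro τ hτ
    have := (hsb τ hτ).2
    intro h; rw [sub_eq_zero] at h; linarith
  -- derivative of g at interior points
  have hgderiv : ∀ a ∈ Set.Ioo (φ T') s₀, HasDerivAt g (s' (g a) - α)⁻¹ a := by
    intro a ha
    have haI : a ∈ Set.Icc (φ T') s₀ := Set.Ioo_subset_Icc_self ha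
    have hmem : g a ∈ Set.Ioo (0:ℝ) T :=
      ⟨hgpos a haI ha.2, lt_trans (hgltT' a haI ha.1) hT'T⟩
    refine HasDerivAt.of_local_left_inverse (hgcont a ha) (hφd _ hmem)
      (hs'ne _ (Set.Ioo_subset_Icc_self hmem)) ?_
    filter_upwards [Ioo_mem_nhds ha.1 ha.2] with y hy
    exact (hgspec y (Set.Ioo_subset_Icc_self hy)).2
  -- ψ
  set ψ : ℝ → ℝ := fun y => y + 2*α * g y with hψdef
  have hψeq : ∀ y ∈ Set.Icc (φ T') s₀, s (g y) + α * g y = ψ y := by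
    intro y hy
    have h1 : s (g y) - α * g y = y := (hgspec y hy).2
    simp only [hψdef]
    linarith
  have hψh : ∀ y ∈ Set.Icc (φ T') s₀, ψ y = hfun (g y) := by
    intro y hy
    rw [← hψeq y hy]
  have hψge : ∀ y ∈ Set.Icc (φ T') s₀, s₀ ≤ ψ y := by
    intro y hy
    rw [hψh y hy]
    have h0 : hfun 0 = s₀ := by simp [hhdef, hs0]
    rcases eq_or_lt_of_le (hgspec y hy).1.1 with h | h
    · rw [← h, h0]
    · rw [← h0]
      exact (hhmono h0mem (hsubT' (hgspec y hy).1) h).le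
  have hψgt : ∀ y ∈ Set.Icc (φ T') s₀, y < s₀ → s₀ < ψ y := by
    intro y hy hlt
    rw [hψh y hy]
    have h0 : hfun 0 = s₀ := by simp [hhdef, hs0]
    rw [← h0]
    exact hhmono h0mem (hsubT' (hgspec y hy).1) (hgpos y hy hlt)
  have hψlt1 : ∀ y ∈ Set.Icc (φ T') s₀, ψ y < 1 := by
    intro y hy
    rw [hψh y hy]
    have h1 : hfun (g y) ≤ hfun T' := by
      rcases eq_or_lt_of_le (hgspec y hy).1.2 with h | h
      · rw [h]
      · exact (hhmono (hsubT' (hgspec y hy).1) hT'mem h).le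
    have h2 : hfun T' = s T' + α * T' := rfl
    have h3 : s T' < s₀ := by
      have := hsanti h0mem hT'mem hT'0
      rwa [hs0] at this
    have h4 : α * T' < α * T := by
      exact mul_lt_mul_of_pos_left hT'T hα
    linarith
  have hψd : ∀ a ∈ Set.Ioo (φ T') s₀,
      HasDerivAt ψ (1 + 2*α * (s' (g a) - α)⁻¹) a := by
    intro a ha
    exact ((hasDerivAt_id a).add ((hgderiv a ha).const_mul (2*α))).congr_deriv (by ring)
  -- derivative of uin0 at interior points
  have hU0 : ∀ z ∈ Set.Ioo s₀ 1, HasDerivAt uin0 (uin0' z) z := fun z hz =>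
    (huin0' z (Set.Ioo_subset_Icc_self hz)).hasDerivAt (Icc_mem_nhds hz.1 hz.2)
  -- properties of f := oddExt uin1
  have hfeq : ∀ z : ℝ, z ≤ 1 → oddExt uin1 z = uin1 z := by
    intro z hz
    simp only [oddExt, if_pos hz]
  have hfc : ContinuousOn (oddExt uin1) (Set.Icc s₀ 1) :=
    huin1.congr (fun z hz => hfeq z hz.2)
  have hfoo : ContinuousOn (oddExt uin1) (Set.Ioo s₀ 1) := hfc.mono Set.Ioo_subset_Icc_self
  have hfint : ∀ a b : ℝ, a ∈ Set.Icc s₀ 1 → b ∈ Set.Icc s₀ 1 →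
      IntervalIntegrable (oddExt uin1) MeasureTheory.volume a b := by
    intro a b ha hb
    exact (hfc.mono (Set.uIcc_subset_Icc ha hb)).intervalIntegrable
  set F₁ : ℝ → ℝ := fun z => ∫ η in s₀..z, oddExt uin1 η with hF₁def
  have hF₁d : ∀ z ∈ Set.Ioo s₀ 1, HasDerivAt F₁ (uin1 z) z := by
    intro z hz
    have h1 : HasDerivAt F₁ (oddExt uin1 z) z :=
      intervalIntegral.integral_hasDerivAt_right
        (hfint s₀ z ⟨le_refl _, hs₀1.le⟩ (Set.Ioo_subset_Icc_self hz))
        (ContinuousOn.stronglyMeasurableAtFilter isOpen_Ioo hfoo z hz)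
        (hfoo.continuousAt (Ioo_mem_nhds hz.1 hz.2))
    rwa [hfeq z hz.2.le] at h1
  have hsplit : ∀ a b : ℝ, a ∈ Set.Icc s₀ 1 → b ∈ Set.Icc s₀ 1 →
      (∫ η in a..b, oddExt uin1 η) = F₁ b - F₁ a := by
    intro a b ha hb
    have h1 := intervalIntegral.integral_add_adjacent_intervals
      (hfint s₀ a ⟨le_refl _, hs₀1.le⟩ ha) (hfint a b ha hb)
    simp only [hF₁def]
    linarith
  -- derivative functions
  set D1 : ℝ × ℝ → ℝ := fun p =>
    (uin0' (p.1 - α * p.2) * (-α) + uin0' (p.1 + α * p.2) * α)/2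
    + (1/(2*α)) * (uin1 (p.1 + α * p.2) * α - uin1 (p.1 - α * p.2) * (-α)) with hD1def
  set c : ℝ × ℝ → ℝ := fun p => (1 + 2*α * (s' (g (p.1 - α * p.2)) - α)⁻¹) * (-α) with hcdef
  set D2 : ℝ × ℝ → ℝ := fun p =>
    (uin0' (p.1 + α * p.2) * α - uin0' (ψ (p.1 - α * p.2)) * c p)/2
    + (1/(2*α)) * (uin1 (p.1 + α * p.2) * α - uin1 (ψ (p.1 - α * p.2)) * c p) with hD2def
  -- key derivative computation in region I
  have key1 : ∀ x t : ℝ, 0 < t → s₀ < x - α * t → x + α * t < 1 →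
      HasDerivAt (fun t' => uRegI α uin0 uin1 x t') (D1 (x, t)) t := by
    intro x t ht hxm hxp
    have hαt : 0 < α * t := mul_pos hα ht
    have hxmIoo : x - α * t ∈ Set.Ioo s₀ 1 := ⟨hxm, by linarith⟩
    have hxpIoo : x + α * t ∈ Set.Ioo s₀ 1 := ⟨by linarith, hxp⟩
    have heq : (fun t' => uRegI α uin0 uin1 x t') =ᶠ[nhds t]
        (fun t' => (uin0 (x - α * t') + uin0 (x + α * t'))/2
          + (1/(2*α)) * (F₁ (x + α * t') - F₁ (x - α * t'))) := by
      have c1 : ∀ᶠ t' in nhds t, 0 < t' := eventually_gt_nhds ht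
      have c2 : ∀ᶠ t' in nhds t, s₀ < x - α * t' := by
        have hc : ContinuousAt (fun t' : ℝ => x - α * t') t := by fun_prop
        exact hc.eventually (lt_mem_nhds hxm)
      have c3 : ∀ᶠ t' in nhds t, x + α * t' < 1 := by
        have hc : ContinuousAt (fun t' : ℝ => x + α * t') t := by fun_prop
        exact hc.eventually (gt_mem_nhds hxp)
      filter_upwards [c1, c2, c3] with t' h1 h2 h3
      have hα1 : 0 < α * t' := mul_pos hα h1
      have hm : x - α * t' ∈ Set.Icc s₀ 1 := ⟨h2.le, by linarith⟩
      have hp : x + α * t' ∈ Set.Icc s₀ 1 := ⟨by linarith, h3.le⟩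
      have o1 : oddExt uin0 (x - α * t') = uin0 (x - α * t') := by
        simp [oddExt, hm.2]
      have o2 : oddExt uin0 (x + α * t') = uin0 (x + α * t') := by
        simp [oddExt, hp.2]
      simp only [uRegI, wFun]
      rw [if_neg (by linarith : ¬ (1:ℝ) ≤ x + α * t'), o1, o2, hsplit _ _ hm hp]
      ring
    have d1 : HasDerivAt (fun t' : ℝ => x - α * t') (-α) t := by
      simpa using ((hasDerivAt_id t).const_mul α).const_sub x
    have d2 : HasDerivAt (fun t' : ℝ => x + α * t') α t := by
      simpa using ((hasDerivAt_id t).const_mul α).const_add x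
    have e1 : HasDerivAt (fun t' => uin0 (x - α * t')) (uin0' (x - α * t) * (-α)) t :=
      (hU0 _ hxmIoo).comp t d1
    have e2 : HasDerivAt (fun t' => uin0 (x + α * t')) (uin0' (x + α * t) * α) t :=
      (hU0 _ hxpIoo).comp t d2
    have e3 : HasDerivAt (fun t' => F₁ (x + α * t')) (uin1 (x + α * t) * α) t :=
      by have := (hF₁d _ hxpIoo).comp t d2; exact this
    have e4 : HasDerivAt (fun t' => F₁ (x - α * t')) (uin1 (x - α * t) * (-α)) t :=
      by have := (hF₁d _ hxmIoo).comp t d1; exact this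
    have hd := (((e1.add e2).div_const 2).add ((e3.sub e4).const_mul (1/(2*α))))
    exact (hd.congr_of_eventuallyEq heq)
  -- key derivative computation in region II
  have key2 : ∀ x t : ℝ, 0 < t → t < T' → s t < x → x < s₀ + α * t →
      s₀ < x + α * t → x + α * t < 1 → s₀ + α * t < 1 →
      HasDerivAt (fun t' => uRegII α uin0 uin1 s th x t') (D2 (x, t)) t := by
    intro x t ht htT' hstx hxs hsp hxp hs1
    have htT : t < T := lt_trans htT' hT'T
    have htmem : t ∈ Set.Icc (0:ℝ) T := ⟨ht.le, htT.le⟩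
    have hyI : x - α * t ∈ Set.Ioo (φ T') s₀ := by
      constructor
      · have h1 : φ t < x - α * t := by
          have : φ t = s t - α * t := rfl
          linarith
        have h2 : φ T' < φ t := hφanti htmem hT'mem htT'
        linarith
      · linarith
    have hyIcc : x - α * t ∈ Set.Icc (φ T') s₀ := Set.Ioo_subset_Icc_self hyI
    have hxpIoo : x + α * t ∈ Set.Ioo s₀ 1 := ⟨hsp, hxp⟩
    have hψIoo : ψ (x - α * t) ∈ Set.Ioo s₀ 1 :=
      ⟨hψgt _ hyIcc hyI.2, hψlt1 _ hyIcc⟩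
    have heq : (fun t' => uRegII α uin0 uin1 s th x t') =ᶠ[nhds t]
        (fun t' => (uin0 (x + α * t') - uin0 (ψ (x - α * t')))/2
          + (1/(2*α)) * (F₁ (x + α * t') - F₁ (ψ (x - α * t')))) := by
      have hconts : ContinuousAt s t := (hsdT t ⟨ht, htT⟩).continuousAt
      have c1 : ∀ᶠ t' in nhds t, 0 < t' := eventually_gt_nhds ht
      have c2 : ∀ᶠ t' in nhds t, t' < T' := eventually_lt_nhds htT'
      have c3 : ∀ᶠ t' in nhds t, s t' < x := hconts.eventually (gt_mem_nhds hstx)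
      have c4 : ∀ᶠ t' in nhds t, x < s₀ + α * t' := by
        have hc : ContinuousAt (fun t' : ℝ => s₀ + α * t') t := by fun_prop
        exact hc.eventually (lt_mem_nhds hxs)
      have c5 : ∀ᶠ t' in nhds t, s₀ < x + α * t' ∧ x + α * t' < 1 := by
        have hc : ContinuousAt (fun t' : ℝ => x + α * t') t := by fun_prop
        exact (hc.eventually (lt_mem_nhds hsp)).and (hc.eventually (gt_mem_nhds hxp))
      filter_upwards [c1, c2, c3, c4, c5] with t' h1 h2 h3 h4 h5
      have ht'T : t' ≤ T := (lt_trans h2 hT'T).le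
      have hy'I : x - α * t' ∈ Set.Icc (φ T') s₀ := by
        constructor
        · have ha : φ t' < x - α * t' := by
            have : φ t' = s t' - α * t' := rfl
            linarith
          have hb : φ T' ≤ φ t' := by
            rcases eq_or_lt_of_le h2.le with h | h
            · rw [h]
            · exact (hφanti ⟨h1.le, ht'T⟩ hT'mem h).le
          linarith
        · linarith
      obtain ⟨hm, he⟩ := hth x t' h1.le ht'T h3.le h4.le
      have hthg : th (x, t') = g (x - α * t') := by
        symm
        apply hguniq (th (x, t')) (⟨hm.1, le_trans hm.2 ht'T⟩) _ hy'I
        have : φ (th (x, t')) = s (th (x, t')) - α * th (x, t') := rfl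
        rw [this]; linarith
      have hψv : s (th (x, t')) + α * th (x, t') = ψ (x - α * t') := by
        rw [hthg]; exact hψeq _ hy'I
      have hp : x + α * t' ∈ Set.Icc s₀ 1 := ⟨h5.1.le, h5.2.le⟩
      have hψm : ψ (x - α * t') ∈ Set.Icc s₀ 1 :=
        ⟨hψge _ hy'I, (hψlt1 _ hy'I).le⟩
      have o2 : oddExt uin0 (x + α * t') = uin0 (x + α * t') := by
        simp [oddExt, hp.2]
      have o3 : oddExt uin0 (ψ (x - α * t')) = uin0 (ψ (x - α * t')) := by
        simp [oddExt, (hψm.2 : ψ (x - α * t') ≤ 1)]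
      simp only [uRegII, wFun]
      rw [if_neg (by linarith : ¬ (1:ℝ) ≤ x + α * t'), hψv, o2, o3, hsplit _ _ hψm hp]
      ring
    have d1 : HasDerivAt (fun t' : ℝ => x - α * t') (-α) t := by
      simpa using ((hasDerivAt_id t).const_mul α).const_sub x
    have d2 : HasDerivAt (fun t' : ℝ => x + α * t') α t := by
      simpa using ((hasDerivAt_id t).const_mul α).const_add x
    have eψ : HasDerivAt (fun t' => ψ (x - α * t'))
        ((1 + 2*α * (s' (g (x - α * t)) - α)⁻¹) * (-α)) t :=
      by have := (hψd _ hyI).comp t d1; exact this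
    have e2 : HasDerivAt (fun t' => uin0 (x + α * t')) (uin0' (x + α * t) * α) t :=
      (hU0 _ hxpIoo).comp t d2
    have e5 : HasDerivAt (fun t' => uin0 (ψ (x - α * t')))
        (uin0' (ψ (x - α * t)) * ((1 + 2*α * (s' (g (x - α * t)) - α)⁻¹) * (-α))) t :=
      (hU0 _ hψIoo).comp t eψ
    have e3 : HasDerivAt (fun t' => F₁ (x + α * t')) (uin1 (x + α * t) * α) t :=
      by have := (hF₁d _ hxpIoo).comp t d2; exact this
    have e6 : HasDerivAt (fun t' => F₁ (ψ (x - α * t')))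
        (uin1 (ψ (x - α * t)) * ((1 + 2*α * (s' (g (x - α * t)) - α)⁻¹) * (-α))) t :=
      by have := (hF₁d _ hψIoo).comp t eψ; exact this
    have hd := (((e2.sub e5).div_const 2).add ((e3.sub e6).const_mul (1/(2*α))))
    have hval : D2 (x, t) =
        (uin0' (x + α * t) * α - uin0' (ψ (x - α * t)) *
          ((1 + 2*α * (s' (g (x - α * t)) - α)⁻¹) * (-α)))/2
        + (1/(2*α)) * (uin1 (x + α * t) * α - uin1 (ψ (x - α * t)) *
          ((1 + 2*α * (s' (g (x - α * t)) - α)⁻¹) * (-α))) := by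
      simp only [hD2def, hcdef]
    rw [hval]
    exact (hd.congr_of_eventuallyEq heq)
  -- set up the limit point data
  set b : ℝ := xb + α * tb with hbdef
  have hαtb : 0 < α * tb := mul_pos hα htb0
  have hxbval : xb = s₀ + α * tb := by linarith
  have hs₀b : s₀ < b := by rw [hbdef]; linarith
  have hb1 : b < 1 := hxb1
  have hbmem : b ∈ Set.Icc s₀ 1 := ⟨hs₀b.le, hb1.le⟩
  have hs₀mem : s₀ ∈ Set.Icc s₀ 1 := ⟨le_refl _, hs₀1.le⟩
  have h0memT : (0:ℝ) ∈ Set.Icc (0:ℝ) T := h0mem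
  have hne : s' 0 - α ≠ 0 := hs'ne 0 h0mem
  -- limit values
  set κ : ℝ := (1 + 2*α * (s' 0 - α)⁻¹) * (-α) with hκdef
  set LI : ℝ := (uin0' s₀ * (-α) + uin0' b * α)/2
    + (1/(2*α)) * (uin1 b * α - uin1 s₀ * (-α)) with hLIdef
  set LII : ℝ := (uin0' b * α - uin0' s₀ * κ)/2
    + (1/(2*α)) * (uin1 b * α - uin1 s₀ * κ) with hLIIdef
  refine ⟨LI, LII, ?_, ?_, ?_, ?_⟩
  · -- limit from region I
    set R1 : Set (ℝ × ℝ) := {p : ℝ × ℝ | 0 < p.2 ∧ p.2 < T ∧ s₀ + α * p.2 < p.1 ∧ p.1 < 1}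
      with hR1def
    have hcm : Continuous (fun p : ℝ × ℝ => p.1 - α * p.2) := by fun_prop
    have hcp : Continuous (fun p : ℝ × ℝ => p.1 + α * p.2) := by fun_prop
    have hmem1 : ∀ᶠ p in nhdsWithin (xb, tb) R1, p ∈ R1 := self_mem_nhdsWithin
    have hop : ∀ᶠ p in nhdsWithin (xb, tb) R1, p.1 + α * p.2 < 1 := by
      apply mem_nhdsWithin_of_mem_nhds
      exact hcp.continuousAt.eventually (gt_mem_nhds hxb1)
    have hAp : Tendsto (fun p : ℝ × ℝ => p.1 + α * p.2) (nhdsWithin (xb, tb) R1)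
        (nhdsWithin b (Set.Icc s₀ 1)) := by
      rw [tendsto_nhdsWithin_iff]
      constructor
      · exact (hcp.tendsto (xb, tb)).mono_left nhdsWithin_le_nhds
      · filter_upwards [hmem1, hop] with p hp h1
        have := hp.1; have := hp.2.2.1
        have hαp : 0 < α * p.2 := mul_pos hα hp.1
        exact ⟨by linarith, h1.le⟩
    have hAm : Tendsto (fun p : ℝ × ℝ => p.1 - α * p.2) (nhdsWithin (xb, tb) R1)
        (nhdsWithin s₀ (Set.Icc s₀ 1)) := by
      rw [tendsto_nhdsWithin_iff]
      constructor
      · have : Tendsto (fun p : ℝ × ℝ => p.1 - α * p.2) (nhds (xb, tb)) (nhds s₀) := by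
          rw [← hxb]; exact hcm.tendsto (xb, tb)
        exact this.mono_left nhdsWithin_le_nhds
      · filter_upwards [hmem1, hop] with p hp h1
        have h2 := hp.2.2.1
        have hαp : 0 < α * p.2 := mul_pos hα hp.1
        exact ⟨by linarith, by linarith⟩
    have t0m : Tendsto (fun p : ℝ × ℝ => uin0' (p.1 - α * p.2))
        (nhdsWithin (xb, tb) R1) (nhds (uin0' s₀)) := (huin0'c s₀ hs₀mem).tendsto.comp hAm
    have t0p : Tendsto (fun p : ℝ × ℝ => uin0' (p.1 + α * p.2))
        (nhdsWithin (xb, tb) R1) (nhds (uin0' b)) := (huin0'c b hbmem).tendsto.comp hAp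
    have t1m : Tendsto (fun p : ℝ × ℝ => uin1 (p.1 - α * p.2))
        (nhdsWithin (xb, tb) R1) (nhds (uin1 s₀)) := (huin1 s₀ hs₀mem).tendsto.comp hAm
    have t1p : Tendsto (fun p : ℝ × ℝ => uin1 (p.1 + α * p.2))
        (nhdsWithin (xb, tb) R1) (nhds (uin1 b)) := (huin1 b hbmem).tendsto.comp hAp
    have hTD1 : Tendsto D1 (nhdsWithin (xb, tb) R1) (nhds LI) := by
      simp only [hD1def, hLIdef]
      exact (((t0m.mul_const (-α)).add (t0p.mul_const α)).div_const 2).add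
        (((t1p.mul_const α).sub (t1m.mul_const (-α))).const_mul (1/(2*α)))
    apply hTD1.congr'
    filter_upwards [hmem1, hop] with p hp h1
    have hαp : 0 < α * p.2 := mul_pos hα hp.1
    exact ((key1 p.1 p.2 hp.1 (by linarith [hp.2.2.1]) h1).deriv).symm
  · -- limit from region II
    set R2 : Set (ℝ × ℝ) := {p : ℝ × ℝ | 0 < p.2 ∧ p.2 < T ∧ s p.2 < p.1 ∧ p.1 < s₀ + α * p.2}
      with hR2def
    set l2 := nhdsWithin (xb, tb) R2 with hl2def
    have hcm : Continuous (fun p : ℝ × ℝ => p.1 - α * p.2) := by fun_prop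
    have hcp : Continuous (fun p : ℝ × ℝ => p.1 + α * p.2) := by fun_prop
    have hmem2 : ∀ᶠ p in l2, p ∈ R2 := self_mem_nhdsWithin
    have hop2 : ∀ᶠ p in l2,
        p.2 < T' ∧ s₀ < p.1 + α * p.2 ∧ p.1 + α * p.2 < 1 ∧ s₀ + α * p.2 < 1 := by
      apply mem_nhdsWithin_of_mem_nhds
      have c1 : ∀ᶠ p : ℝ × ℝ in nhds (xb, tb), p.2 < T' :=
        (continuous_snd.continuousAt).eventually (gt_mem_nhds htbT')
      have c2 : ∀ᶠ p : ℝ × ℝ in nhds (xb, tb), s₀ < p.1 + α * p.2 :=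
        hcp.continuousAt.eventually (lt_mem_nhds hs₀b)
      have c3 : ∀ᶠ p : ℝ × ℝ in nhds (xb, tb), p.1 + α * p.2 < 1 :=
        hcp.continuousAt.eventually (gt_mem_nhds hb1)
      have c4 : ∀ᶠ p : ℝ × ℝ in nhds (xb, tb), s₀ + α * p.2 < 1 := by
        have hc : Continuous (fun p : ℝ × ℝ => s₀ + α * p.2) := by fun_prop
        have hv : s₀ + α * tb < 1 := by rw [← hxbval]; linarith
        exact hc.continuousAt.eventually (gt_mem_nhds hv)
      filter_upwards [c1, c2, c3, c4] with p h1 h2 h3 h4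
      exact ⟨h1, h2, h3, h4⟩
    -- eventual facts in region II
    have hyIcc2 : ∀ᶠ p in l2, p.1 - α * p.2 ∈ Set.Icc (φ T') s₀ := by
      filter_upwards [hmem2, hop2] with p hp h1
      have ha : φ p.2 < p.1 - α * p.2 := by
        have : φ p.2 = s p.2 - α * p.2 := rfl
        have := hp.2.2.1; linarith
      have hb : φ T' ≤ φ p.2 := by
        rcases eq_or_lt_of_le h1.1.le with h | h
        · rw [h]
        · exact (hφanti ⟨hp.1.le, hp.2.1.le⟩ hT'mem h).le
      have := hp.2.2.2
      exact ⟨by linarith, by linarith⟩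
    have hBm : Tendsto (fun p : ℝ × ℝ => p.1 - α * p.2) l2
        (nhdsWithin s₀ (Set.Icc (φ T') s₀)) := by
      rw [tendsto_nhdsWithin_iff]
      refine ⟨?_, hyIcc2⟩
      have : Tendsto (fun p : ℝ × ℝ => p.1 - α * p.2) (nhds (xb, tb)) (nhds s₀) := by
        rw [← hxb]; exact hcm.tendsto (xb, tb)
      exact this.mono_left nhdsWithin_le_nhds
    have hBmn : Tendsto (fun p : ℝ × ℝ => p.1 - α * p.2) l2 (nhds s₀) :=
      hBm.mono_right nhdsWithin_le_nhds
    have hBg : Tendsto (fun p : ℝ × ℝ => g (p.1 - α * p.2)) l2 (nhds 0) := by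
      rw [Metric.tendsto_nhds]
      intro ε hε
      set ε' : ℝ := min ε T' with hε'def
      have hε'0 : 0 < ε' := lt_min hε hT'0
      have hε'T : ε' ≤ T' := min_le_right _ _
      have hε'mem : ε' ∈ Set.Icc (0:ℝ) T := ⟨hε'0.le, le_trans hε'T hT'T.le⟩
      have hφε' : φ ε' < s₀ := by
        have := hφanti h0mem hε'mem hε'0
        rwa [hφ0] at this
      have hev : ∀ᶠ p in l2, φ ε' < p.1 - α * p.2 :=
        hBmn.eventually (lt_mem_nhds hφε')
      filter_upwards [hyIcc2, hev] with p h1 h2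
      have hlt : g (p.1 - α * p.2) < ε' := hglt _ h1 ε' hε'mem h2
      have hge : 0 ≤ g (p.1 - α * p.2) := (hgspec _ h1).1.1
      rw [Real.dist_eq, abs_of_nonneg (by linarith)]
      have := min_le_left ε T'
      simp only [sub_zero]
      linarith
    have hBgW : Tendsto (fun p : ℝ × ℝ => g (p.1 - α * p.2)) l2
        (nhdsWithin 0 (Set.Icc (0:ℝ) T)) := by
      rw [tendsto_nhdsWithin_iff]
      refine ⟨hBg, ?_⟩
      filter_upwards [hyIcc2] with p h1
      exact hsubT' (hgspec _ h1).1
    have hBs' : Tendsto (fun p : ℝ × ℝ => s' (g (p.1 - α * p.2))) l2 (nhds (s' 0)) :=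
      (hs'c 0 h0mem).tendsto.comp hBgW
    have hBψ : Tendsto (fun p : ℝ × ℝ => ψ (p.1 - α * p.2)) l2
        (nhdsWithin s₀ (Set.Icc s₀ 1)) := by
      rw [tendsto_nhdsWithin_iff]
      constructor
      · have h1 : Tendsto (fun p : ℝ × ℝ => (p.1 - α * p.2) + 2*α * g (p.1 - α * p.2)) l2
            (nhds (s₀ + 2*α*0)) := hBmn.add (hBg.const_mul (2*α))
        simpa [hψdef] using h1
      · filter_upwards [hyIcc2] with p h1
        exact ⟨hψge _ h1, (hψlt1 _ h1).le⟩
    have hBp : Tendsto (fun p : ℝ × ℝ => p.1 + α * p.2) l2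
        (nhdsWithin b (Set.Icc s₀ 1)) := by
      rw [tendsto_nhdsWithin_iff]
      constructor
      · exact (hcp.tendsto (xb, tb)).mono_left nhdsWithin_le_nhds
      · filter_upwards [hop2] with p h1
        exact ⟨h1.2.1.le, h1.2.2.1.le⟩
    have t0ψ : Tendsto (fun p : ℝ × ℝ => uin0' (ψ (p.1 - α * p.2))) l2 (nhds (uin0' s₀)) :=
      (huin0'c s₀ hs₀mem).tendsto.comp hBψ
    have t1ψ : Tendsto (fun p : ℝ × ℝ => uin1 (ψ (p.1 - α * p.2))) l2 (nhds (uin1 s₀)) :=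
      (huin1 s₀ hs₀mem).tendsto.comp hBψ
    have t0p : Tendsto (fun p : ℝ × ℝ => uin0' (p.1 + α * p.2)) l2 (nhds (uin0' b)) :=
      (huin0'c b hbmem).tendsto.comp hBp
    have t1p : Tendsto (fun p : ℝ × ℝ => uin1 (p.1 + α * p.2)) l2 (nhds (uin1 b)) :=
      (huin1 b hbmem).tendsto.comp hBp
    have hBc : Tendsto c l2 (nhds κ) := by
      simp only [hcdef, hκdef]
      exact ((((hBs'.sub_const α).inv₀ hne).const_mul (2*α)).const_add 1).mul_const (-α)
    have hTD2 : Tendsto D2 l2 (nhds LII) := by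
      simp only [hD2def, hLIIdef]
      exact (((t0p.mul_const α).sub (t0ψ.mul hBc)).div_const 2).add
        (((t1p.mul_const α).sub (t1ψ.mul hBc)).const_mul (1/(2*α)))
    apply hTD2.congr'
    filter_upwards [hmem2, hop2] with p hp h1
    exact ((key2 p.1 p.2 hp.1 h1.1 hp.2.2.1 hp.2.2.2 h1.2.1 h1.2.2.1 h1.2.2.2).deriv).symm
  · -- value of the jump
    rw [hLIIdef, hLIdef, hκdef]
    exact jump_algebra_aux α (s' 0) (uin0' s₀) (uin1 s₀) (uin0' b) (uin1 b) hα0 hne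
  · -- the iff
    have hdiff : LII - LI = (α / (s' 0 - α)) * (s' 0 * uin0' s₀ + uin1 s₀) := by
      rw [hLIIdef, hLIdef, hκdef]
      exact jump_algebra_aux α (s' 0) (uin0' s₀) (uin1 s₀) (uin0' b) (uin1 b) hα0 hne
    have hcoef : α / (s' 0 - α) ≠ 0 := div_ne_zero hα0 hne
    constructor
    · intro h
      have h0 : LII - LI = 0 := by rw [h]; ring
      rw [hdiff] at h0
      rcases mul_eq_zero.1 h0 with h' | h'
      · exact absurd h' hcoef
      · exact h'
    · intro h
      have : LII - LI = 0 := by rw [hdiff, h, mul_zero]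
      linarith
end

section
/- Let λ > 0, α, β > 0, s₀ ∈ (0, 1/2], let u_{in0} be C² and u_{in1} be C¹ on a neighbourhood of [s₀,1], and define g(x) = ( α·u_{in0}′(x) + u_{in1}(x) ) / (2λ). Let s be a twice continuously differentiable solution of the free-boundary ODE ṡ(t) = (α+β)/2 − √( ((α+β)/2)² + g(s(t)+αt) − αβ ) with s(0) = s₀, and suppose ṡ(0) = −u_{in1}(s₀)/u_{in0}′(s₀) with u_{in0}′(s₀) ≠ 0 and 2·u_{in1}(s₀) + (α+β)·u_{in0}′(s₀) ≠ 0. Then s̈(0) = ( α·u_{in0}″(s₀) + u_{in1}′(s₀) )·( u_{in1}(s₀) − α·u_{in0}′(s₀) ) / ( 2λ·( 2·u_{in1}(s₀) + (α+β)·u_{in0}′(s₀) ) ). -/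
/-!
STATEMENT 15: With `g = (α·u_{in0}′ + u_{in1})/(2λ)` and `s` a C² solution of
the free-boundary ODE `ṡ = (α+β)/2 − √(((α+β)/2)² + g(s+αt) − αβ)`, `s(0) = s₀`,
satisfying the compatibility condition (A) `ṡ(0) = −u_{in1}(s₀)/u_{in0}′(s₀)`,
one has
`s̈(0) = (α·u_{in0}″(s₀) + u_{in1}′(s₀))·(u_{in1}(s₀) − α·u_{in0}′(s₀)) /
        (2λ·(2·u_{in1}(s₀) + (α+β)·u_{in0}′(s₀)))`.
The data `u_{in0}` (resp. `u_{in1}`) are C² (resp. C¹) on an open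
neighbourhood `U` of `[s₀,1]`.
-/

theorem initial_second_derivative_of_free_boundary
    (lam α β s₀ T : ℝ) (uin0 uin1 : ℝ → ℝ) (s : ℝ → ℝ) (U : Set ℝ)
    (hlam : 0 < lam) (hα : 0 < α) (hβ : 0 < β)
    (hs₀ : s₀ ∈ Set.Ioc 0 (1 / 2 : ℝ)) (hT : 0 < T)
    (hU : IsOpen U) (hUi : Set.Icc s₀ 1 ⊆ U)
    (h0 : ContDiffOn ℝ 2 uin0 U) (h1 : ContDiffOn ℝ 1 uin1 U)
    (hs2 : ContDiffOn ℝ 2 s (Set.Icc 0 T)) (hs0 : s 0 = s₀)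
    (hODE : ∀ t ∈ Set.Icc (0 : ℝ) T, derivWithin s (Set.Icc 0 T) t
      = (α + β) / 2 - Real.sqrt (((α + β) / 2) ^ 2
          + (α * deriv uin0 (s t + α * t) + uin1 (s t + α * t)) / (2 * lam) - α * β))
    (ha : deriv uin0 s₀ ≠ 0)
    (hb : 2 * uin1 s₀ + (α + β) * deriv uin0 s₀ ≠ 0)
    (hA : derivWithin s (Set.Icc 0 T) 0 = -uin1 s₀ / deriv uin0 s₀) :
    derivWithin (derivWithin s (Set.Icc 0 T)) (Set.Icc 0 T) 0
      = (α * deriv (deriv uin0) s₀ + deriv uin1 s₀) *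
          (uin1 s₀ - α * deriv uin0 s₀) /
        (2 * lam * (2 * uin1 s₀ + (α + β) * deriv uin0 s₀)) := by
  obtain ⟨hs₀pos, hs₀le⟩ := hs₀
  have hsU : s₀ ∈ U := hUi ⟨le_refl _, by linarith⟩
  have h0T : (0:ℝ) ∈ Set.Icc (0:ℝ) T := ⟨le_refl _, hT.le⟩
  have hud : UniqueDiffOn ℝ (Set.Icc (0:ℝ) T) := uniqueDiffOn_Icc hT
  set a := deriv uin0 s₀ with ha'
  set b := uin1 s₀ with hb'
  set c := deriv (deriv uin0) s₀ with hc'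
  set d := deriv uin1 s₀ with hd'
  have hpt : s 0 + α * 0 = s₀ := by rw [hs0]; ring
  -- value of the square root at time 0
  have hsq : Real.sqrt (((α+β)/2)^2 + (α * a + b)/(2*lam) - α*β) = (α+β)/2 + b/a := by
    have h := hODE 0 h0T
    rw [hA, hpt] at h
    rw [← ha', ← hb'] at h
    have h2 : -b/a = -(b/a) := by ring
    rw [h2] at h
    linarith
  have hMne : (α+β)/2 + b/a ≠ 0 := by
    intro h
    apply hb
    have : ((α+β)/2 + b/a) * (2*a) = 0 := by rw [h]; ring
    field_simp at this
    linarith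
  have hApos : 0 < ((α+β)/2)^2 + (α * a + b)/(2*lam) - α*β := by
    have : Real.sqrt (((α+β)/2)^2 + (α * a + b)/(2*lam) - α*β) ≠ 0 := by
      rw [hsq]; exact hMne
    exact Real.sqrt_ne_zero'.mp this
  -- derivatives of the data at s₀
  have hc0 : ContDiffAt ℝ 1 (deriv uin0) s₀ :=
    (h0.deriv_of_isOpen hU (by norm_num)).contDiffAt (hU.mem_nhds hsU)
  have hD0 : HasDerivAt (deriv uin0) c s₀ := (hc0.differentiableAt one_ne_zero).hasDerivAt
  have hD1 : HasDerivAt uin1 d s₀ :=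
    (((h1.contDiffAt (hU.mem_nhds hsU)).differentiableAt one_ne_zero)).hasDerivAt
  have hg : HasDerivAt (fun x => (α * deriv uin0 x + uin1 x)/(2*lam)) ((α * c + d)/(2*lam)) s₀ :=
    ((hD0.const_mul α).add hD1).div_const _
  -- derivative of s at 0
  have hsd : HasDerivWithinAt s (-b/a) (Set.Icc 0 T) 0 := by
    have h := (hs2.differentiableOn two_ne_zero 0 h0T).hasDerivWithinAt
    rwa [hA] at h
  have hinner : HasDerivWithinAt (fun t => s t + α * t) (-b/a + α) (Set.Icc 0 T) 0 := by
    have h2 : HasDerivAt (fun t : ℝ => α * t) α 0 := by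
      simpa using (hasDerivAt_id (0:ℝ)).const_mul α
    exact hsd.add h2.hasDerivWithinAt
  -- composite g(s t + α t)
  have hgcomp : HasDerivWithinAt
      (fun t => (α * deriv uin0 (s t + α * t) + uin1 (s t + α * t))/(2*lam))
      ((α * c + d)/(2*lam) * (-b/a + α)) (Set.Icc 0 T) 0 := by
    have hg' : HasDerivAt (fun x => (α * deriv uin0 x + uin1 x)/(2*lam))
        ((α * c + d)/(2*lam)) (s 0 + α * 0) := by rw [hpt]; exact hg
    exact hg'.comp_hasDerivWithinAt 0 hinner
  -- inside the square root
  have hin : HasDerivWithinAt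
      (fun t => ((α+β)/2)^2 + (α * deriv uin0 (s t + α * t) + uin1 (s t + α * t))/(2*lam) - α*β)
      ((α * c + d)/(2*lam) * (-b/a + α)) (Set.Icc 0 T) 0 :=
    ((hgcomp.const_add _).sub_const _)
  have hval : ((α+β)/2)^2 + (α * deriv uin0 (s 0 + α * 0) + uin1 (s 0 + α * 0))/(2*lam) - α*β
      = ((α+β)/2)^2 + (α * a + b)/(2*lam) - α*β := by rw [hpt]
  -- square root composite
  have hsqrt : HasDerivWithinAt
      (fun t => Real.sqrt (((α+β)/2)^2
        + (α * deriv uin0 (s t + α * t) + uin1 (s t + α * t))/(2*lam) - α*β))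
      (1 / (2 * ((α+β)/2 + b/a)) * ((α * c + d)/(2*lam) * (-b/a + α))) (Set.Icc 0 T) 0 := by
    have hs' : HasDerivAt Real.sqrt
        (1 / (2 * Real.sqrt (((α+β)/2)^2 + (α * a + b)/(2*lam) - α*β)))
        (((α+β)/2)^2 + (α * deriv uin0 (s 0 + α * 0) + uin1 (s 0 + α * 0))/(2*lam) - α*β) := by
      rw [hval]
      exact Real.hasDerivAt_sqrt hApos.ne'
    rw [hsq] at hs'
    exact hs'.comp_hasDerivWithinAt 0 hin
  have hF : HasDerivWithinAt
      (fun t => (α+β)/2 - Real.sqrt (((α+β)/2)^2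
        + (α * deriv uin0 (s t + α * t) + uin1 (s t + α * t))/(2*lam) - α*β))
      (-(1 / (2 * ((α+β)/2 + b/a)) * ((α * c + d)/(2*lam) * (-b/a + α)))) (Set.Icc 0 T) 0 :=
    hsqrt.const_sub _
  have hkey : derivWithin (derivWithin s (Set.Icc 0 T)) (Set.Icc 0 T) 0
      = -(1 / (2 * ((α+β)/2 + b/a)) * ((α * c + d)/(2*lam) * (-b/a + α))) := by
    rw [derivWithin_congr hODE (hODE 0 h0T)]
    exact hF.derivWithin (hud 0 h0T)
  rw [hkey]
  have hbne : 2 * b + (α + β) * a ≠ 0 := hb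
  have hrew : (α + β) / 2 + b / a = (2 * b + (α + β) * a) / (2 * a) := by
    field_simp; ring
  rw [hrew, eq_div_iff (mul_ne_zero (by positivity : (2:ℝ)*lam ≠ 0) hbne)]
  field_simp
  ring
end

section
/- Let τ > 0, D > 0, ρ > 0 be constants, L > 0, T > 0, and let s : [0,T] → (0,L) be twice continuously differentiable. Let c be twice continuously differentiable and J continuously differentiable on the region {(x,t) : 0 ≤ t ≤ T, s(t) ≤ x ≤ L}, and suppose on this region: (i) Cattaneo's law J + τ·∂J/∂t = −D·∂c/∂x; (ii) the continuity equation ∂c/∂t = −∂J/∂x; and (iii) the flux relation 2·J(s(t),t) = ṡ(t)·( ρ + 2·c(s(t),t) ) for all t ∈ [0,T]. Then for all t ∈ [0,T]: −2D·(∂c/∂x)(s(t),t) = ṡ(t)·( ρ + 2·c(s(t),t) ) + τ·[ s̈(t)·( ρ + 2·c(s(t),t) ) + 2·ṡ(t)²·(∂c/∂x)(s(t),t) + 4·ṡ(t)·(∂c/∂t)(s(t),t) ]. -/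
/-!
STATEMENT 17: Differentiating the flux relation
`2·J(s(t),t) = ṡ(t)·(ρ + 2·c(s(t),t))` in time and using Cattaneo's law and
the continuity equation yields the free boundary condition
`−2D·c_x(s,t) = ṡ·(ρ + 2c(s,t)) + τ·[ s̈·(ρ + 2c(s,t)) + 2ṡ²·c_x(s,t) + 4ṡ·c_t(s,t) ]`.
Here `c` is C² and `J` is C¹ on (an open neighbourhood `U` of) the region
`{(x,t) : 0 ≤ t ≤ T, s(t) ≤ x ≤ L}`; points of `ℝ²` are pairs `(x,t)`.
-/

/-- Partial derivative with respect to the first (space) variable. -/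
noncomputable def pderivX (f : ℝ × ℝ → ℝ) (p : ℝ × ℝ) : ℝ :=
  deriv (fun x => f (x, p.2)) p.1

/-- Partial derivative with respect to the second (time) variable. -/
noncomputable def pderivT (f : ℝ × ℝ → ℝ) (p : ℝ × ℝ) : ℝ :=
  deriv (fun t => f (p.1, t)) p.2


lemma hasDerivAt_pderivX (f : ℝ × ℝ → ℝ) (p : ℝ × ℝ) (hf : DifferentiableAt ℝ f p) :
    HasDerivAt (fun x => f (x, p.2)) (fderiv ℝ f p (1, 0)) p.1 := by
  have h : HasDerivAt (fun x : ℝ => (x, p.2)) ((1 : ℝ), (0 : ℝ)) p.1 :=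
    (hasDerivAt_id p.1).prodMk (hasDerivAt_const p.1 p.2)
  exact HasFDerivAt.comp_hasDerivAt_of_eq p.1 hf.hasFDerivAt h rfl

lemma hasDerivAt_pderivT (f : ℝ × ℝ → ℝ) (p : ℝ × ℝ) (hf : DifferentiableAt ℝ f p) :
    HasDerivAt (fun t => f (p.1, t)) (fderiv ℝ f p (0, 1)) p.2 := by
  have h : HasDerivAt (fun t : ℝ => (p.1, t)) ((0 : ℝ), (1 : ℝ)) p.2 :=
    (hasDerivAt_const p.2 p.1).prodMk (hasDerivAt_id p.2)
  exact HasFDerivAt.comp_hasDerivAt_of_eq p.2 hf.hasFDerivAt h rfl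

lemma fderiv_apply_eq_pderiv (f : ℝ × ℝ → ℝ) (p : ℝ × ℝ) (hf : DifferentiableAt ℝ f p)
    (a b : ℝ) : fderiv ℝ f p (a, b) = a * pderivX f p + b * pderivT f p := by
  have hx : pderivX f p = fderiv ℝ f p (1, 0) := (hasDerivAt_pderivX f p hf).deriv
  have ht : pderivT f p = fderiv ℝ f p (0, 1) := (hasDerivAt_pderivT f p hf).deriv
  have hab : (a, b) = a • ((1 : ℝ), (0 : ℝ)) + b • ((0 : ℝ), (1 : ℝ)) := by
    simp [Prod.ext_iff]
  rw [hx, ht, hab, map_add, map_smul, map_smul, smul_eq_mul, smul_eq_mul]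

lemma comp_hasDerivWithinAt (f : ℝ × ℝ → ℝ) (s s' : ℝ → ℝ) (T t : ℝ)
    (ht : t ∈ Set.Icc (0 : ℝ) T)
    (hs : HasDerivWithinAt s (s' t) (Set.Icc 0 T) t)
    (hf : DifferentiableAt ℝ f (s t, t)) :
    HasDerivWithinAt (fun u => f (s u, u))
      (s' t * pderivX f (s t, t) + pderivT f (s t, t)) (Set.Icc 0 T) t := by
  have hpair : HasDerivWithinAt (fun u : ℝ => (s u, u)) (s' t, (1 : ℝ)) (Set.Icc 0 T) t :=
    hs.prodMk (hasDerivWithinAt_id t _)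
  have H : HasDerivWithinAt (fun u => f (s u, u)) (fderiv ℝ f (s t, t) (s' t, 1))
      (Set.Icc 0 T) t :=
    HasFDerivAt.comp_hasDerivWithinAt_of_eq t hf.hasFDerivAt hpair rfl
  rw [fderiv_apply_eq_pderiv f (s t, t) hf, one_mul] at H
  exact H

theorem free_boundary_condition_from_flux_relation (τ D ρ L T : ℝ)
    (s s' s'' : ℝ → ℝ) (c J : ℝ × ℝ → ℝ) (U : Set (ℝ × ℝ))
    (hτ : 0 < τ) (hD : 0 < D) (hρ : 0 < ρ) (hL : 0 < L) (hT : 0 < T)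
    (hrange : ∀ t ∈ Set.Icc (0 : ℝ) T, s t ∈ Set.Ioo 0 L)
    (hs' : ∀ t ∈ Set.Icc (0 : ℝ) T, HasDerivWithinAt s (s' t) (Set.Icc 0 T) t)
    (hs'' : ∀ t ∈ Set.Icc (0 : ℝ) T, HasDerivWithinAt s' (s'' t) (Set.Icc 0 T) t)
    (hs''c : ContinuousOn s'' (Set.Icc 0 T))
    (hU : IsOpen U)
    (hUR : {p : ℝ × ℝ | 0 ≤ p.2 ∧ p.2 ≤ T ∧ s p.2 ≤ p.1 ∧ p.1 ≤ L} ⊆ U)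
    (hc : ContDiffOn ℝ 2 c U) (hJ : ContDiffOn ℝ 1 J U)
    (hcattaneo : ∀ p ∈ {p : ℝ × ℝ | 0 ≤ p.2 ∧ p.2 ≤ T ∧ s p.2 ≤ p.1 ∧ p.1 ≤ L},
      J p + τ * pderivT J p = -D * pderivX c p)
    (hcontinuity : ∀ p ∈ {p : ℝ × ℝ | 0 ≤ p.2 ∧ p.2 ≤ T ∧ s p.2 ≤ p.1 ∧ p.1 ≤ L},
      pderivT c p = -pderivX J p)
    (hflux : ∀ t ∈ Set.Icc (0 : ℝ) T, 2 * J (s t, t) = s' t * (ρ + 2 * c (s t, t))) :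
    ∀ t ∈ Set.Icc (0 : ℝ) T,
      -2 * D * pderivX c (s t, t)
        = s' t * (ρ + 2 * c (s t, t))
          + τ * (s'' t * (ρ + 2 * c (s t, t))
            + 2 * (s' t) ^ 2 * pderivX c (s t, t)
            + 4 * s' t * pderivT c (s t, t)) := by
  
  intro t ht
  set p : ℝ × ℝ := (s t, t) with hp
  have hpmem : p ∈ {p : ℝ × ℝ | 0 ≤ p.2 ∧ p.2 ≤ T ∧ s p.2 ≤ p.1 ∧ p.1 ≤ L} := by
    refine ⟨ht.1, ht.2, le_refl _, (hrange t ht).2.le⟩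
  have hpU : U ∈ nhds p := hU.mem_nhds (hUR hpmem)
  have hcd : DifferentiableAt ℝ c p :=
    ((hc.differentiableOn (by norm_num)).differentiableAt hpU)
  have hJd : DifferentiableAt ℝ J p :=
    ((hJ.differentiableOn (by norm_num)).differentiableAt hpU)
  -- derivative of LHS of flux relation
  have hL1 : HasDerivWithinAt (fun u => 2 * J (s u, u))
      (2 * (s' t * pderivX J p + pderivT J p)) (Set.Icc 0 T) t :=
    (comp_hasDerivWithinAt J s s' T t ht (hs' t ht) hJd).const_mul 2
  -- derivative of RHS of flux relation
  have hcc : HasDerivWithinAt (fun u => ρ + 2 * c (s u, u))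
      (2 * (s' t * pderivX c p + pderivT c p)) (Set.Icc 0 T) t :=
    ((comp_hasDerivWithinAt c s s' T t ht (hs' t ht) hcd).const_mul 2).const_add ρ
  have hR1 : HasDerivWithinAt (fun u => s' u * (ρ + 2 * c (s u, u)))
      (s'' t * (ρ + 2 * c p) + s' t * (2 * (s' t * pderivX c p + pderivT c p)))
      (Set.Icc 0 T) t := (hs'' t ht).mul hcc
  -- the two sides agree on Icc, hence so do derivatives
  have hL2 : HasDerivWithinAt (fun u => 2 * J (s u, u))
      (s'' t * (ρ + 2 * c p) + s' t * (2 * (s' t * pderivX c p + pderivT c p)))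
      (Set.Icc 0 T) t := by
    refine hR1.congr (fun u hu => ?_) (hflux t ht)
    exact hflux u hu
  have hud : UniqueDiffWithinAt ℝ (Set.Icc (0:ℝ) T) t :=
    (uniqueDiffOn_Icc hT) t ht
  have hkey : 2 * (s' t * pderivX J p + pderivT J p)
      = s'' t * (ρ + 2 * c p) + s' t * (2 * (s' t * pderivX c p + pderivT c p)) := by
    rw [← hL1.derivWithin hud, ← hL2.derivWithin hud]
  have hcat := hcattaneo p hpmem
  have hcont := hcontinuity p hpmem
  have hfl := hflux t ht
  have hcp : c (s t, t) = c p := rfl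
  have hJp : J (s t, t) = J p := rfl
  rw [hcp] at hfl ⊢
  have hJx : pderivX J p = -pderivT c p := by linarith
  rw [hJx] at hkey
  linear_combination (-2 : ℝ) * hcat + hfl + τ * hkey
end
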